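/- arXiv:1506.01120 — 6 statements merged into one kernel-verified Lean document; each statement's English description precedes it below -/
import Mathlib

section
/- The number of cyclic subgroups of the abelian group C_{p^n} × C_{p^m} (with p prime and m ≥ n ≥ 1) is p^n(m - n + 1) + 2(p^n - 1)/(p - 1). -/
open Finset

section Aux

lemma cyclic_count_pow_eq_one' {α : Type*} [Group α] [Fintype α] [IsCyclic α] [DecidableEq α]
    (N : ℕ) :
    #{a : α | a ^ N = 1} = Nat.gcd N (Fintype.card α) := by
  have hc : Fintype.card α ≠ 0 := Fintype.card_ne_zero
  have hg : Nat.gcd N (Fintype.card α) ≠ 0 := Nat.gcd_ne_zero_right hc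
  have h1 : #{a : α | a ^ N = 1} = #{a : α | a ^ Nat.gcd N (Fintype.card α) = 1} := by
    congr 1; ext a; simp only [mem_filter, mem_univ, true_and]; exact ⟨fun h => pow_gcd_eq_one.mpr ⟨h, pow_card_eq_one⟩, fun h => by obtain ⟨k, hk⟩ := Nat.gcd_dvd_left N (Fintype.card α); rw [hk, pow_mul, h, one_pow]⟩
  rw [h1, ← sum_card_orderOf_eq_card_pow_eq_one hg]
  have h2 : ∀ d ∈ (Nat.gcd N (Fintype.card α)).divisors,
      #{a : α | orderOf a = d} = d.totient := fun d hd =>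
    IsCyclic.card_orderOf_eq_totient ((Nat.mem_divisors.mp hd).1.trans (Nat.gcd_dvd_right _ _))
  rw [Finset.sum_congr rfl h2, Nat.sum_totient]

lemma equiv_count_pow_eq_one' {G H : Type*} [Group G] [Group H] [Fintype G] [Fintype H]
    [DecidableEq G] [DecidableEq H] (e : G ≃* H) (N : ℕ) :
    #{g : G | g ^ N = 1} = #{h : H | h ^ N = 1} := by
  refine Finset.card_bij' (fun g _ => e g) (fun h _ => e.symm h) ?_ ?_ ?_ ?_
  · intro g hg
    simp only [mem_filter, mem_univ, true_and] at hg ⊢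
    rw [← map_pow, hg, map_one]
  · intro h hh
    simp only [mem_filter, mem_univ, true_and] at hh ⊢
    rw [← map_pow, hh, map_one]
  · intro g _; simp
  · intro h _; simp

lemma prod_count_pow_eq_one' {α β : Type*} [Group α] [Group β] [Fintype α] [Fintype β]
    [DecidableEq α] [DecidableEq β] (N : ℕ) :
    #{x : α × β | x ^ N = 1} = #{a : α | a ^ N = 1} * #{b : β | b ^ N = 1} := by
  rw [← Finset.card_product]
  congr 1
  ext x
  simp [Finset.mem_product, Prod.ext_iff, Prod.pow_fst, Prod.pow_snd]

lemma zmod_prod_count_pow_eq_one' (A B N : ℕ) [NeZero A] [NeZero B] :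
    #{g : Multiplicative (ZMod A × ZMod B) | g ^ N = 1} = Nat.gcd N A * Nat.gcd N B := by
  rw [equiv_count_pow_eq_one' (MulEquiv.prodMultiplicative (G := ZMod A) (H := ZMod B)) N]
  rw [prod_count_pow_eq_one']
  rw [cyclic_count_pow_eq_one', cyclic_count_pow_eq_one']
  simp [ZMod.card]

lemma isCyclic_zpowers' {G : Type*} [Group G] (g : G) : IsCyclic (Subgroup.zpowers g) :=
  ⟨⟨g, Subgroup.mem_zpowers g⟩, fun x => by
    obtain ⟨k, hk⟩ := Subgroup.mem_zpowers_iff.mp x.2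
    exact Subgroup.mem_zpowers_iff.mpr ⟨k, Subtype.ext (by simpa using hk)⟩⟩

lemma card_orderOf_eq_mul_totient' {G : Type*} [Group G] [Fintype G] [DecidableEq G]
    [DecidableEq (Subgroup G)] (d : ℕ) :
    #(univ.filter fun g : G => orderOf g = d) =
      #((univ.image fun g : G => Subgroup.zpowers g).filter fun S : Subgroup G =>
          Nat.card ↥S = d) * d.totient := by
  classical
  rw [Finset.card_eq_sum_card_fiberwise (f := fun g : G => Subgroup.zpowers g)
      (t := (univ.image fun g : G => Subgroup.zpowers g).filter fun S : Subgroup G =>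
          Nat.card ↥S = d)
      (fun g hg => by
        simp only [coe_filter, Set.mem_setOf_eq, mem_univ, true_and] at hg
        simp only [coe_filter, Set.mem_setOf_eq, mem_image]
        exact ⟨⟨g, mem_univ g, rfl⟩, by rw [Nat.card_zpowers]; exact hg⟩)]
  have h : ∀ S ∈ (univ.image fun g : G => Subgroup.zpowers g).filter fun S : Subgroup G =>
      Nat.card ↥S = d,
      #((univ.filter fun g : G => orderOf g = d).filter fun g => Subgroup.zpowers g = S) =
        d.totient := by
    intro S hS
    simp only [mem_filter, mem_image] at hS
    obtain ⟨⟨h, -, rfl⟩, hcard⟩ := hS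
    haveI : IsCyclic (Subgroup.zpowers h) := isCyclic_zpowers' h
    have hb : #((univ.filter fun g : G => orderOf g = d).filter
          fun g => Subgroup.zpowers g = Subgroup.zpowers h) =
        #(univ.filter fun x : Subgroup.zpowers h => orderOf x = d) := by
      refine Finset.card_bij' (fun g hg => ⟨g, ?_⟩) (fun x _ => (x : G)) ?_ ?_ ?_ ?_
      · simp only [mem_filter, mem_univ, true_and] at hg
        rw [← hg.2]; exact Subgroup.mem_zpowers g
      · intro g hg
        simp only [mem_filter, mem_univ, true_and] at hg ⊢
        rw [Subgroup.orderOf_mk]; exact hg.1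
      · intro x hx
        simp only [mem_filter, mem_univ, true_and] at hx ⊢
        constructor
        · rw [Subgroup.orderOf_coe]; exact hx
        · refine Subgroup.eq_of_le_of_card_ge (Subgroup.zpowers_le.mpr x.2) ?_
          have hx' : Nat.card (Subgroup.zpowers (x : G)) = d := by
            rw [Nat.card_zpowers, Subgroup.orderOf_coe, hx]
          rw [hx', hcard]
      · intro g _; rfl
      · intro x _; rfl
    rw [hb]
    have hFin : Fintype.card (Subgroup.zpowers h) = d := by
      rw [← Nat.card_eq_fintype_card]; exact hcard
    have := IsCyclic.card_orderOf_eq_totient (α := Subgroup.zpowers h) (d := d)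
      (by rw [hFin])
    convert this using 2
  rw [Finset.sum_congr rfl h, Finset.sum_const, smul_eq_mul]

lemma geom_sum_aux {p : ℕ} (hp : 1 ≤ p) : ∀ N : ℕ, (∑ i ∈ range N, p ^ i) * (p - 1) + 1 = p ^ N := by
  intro N
  induction N with
  | zero => simp
  | succ N ih =>
    rw [sum_range_succ, add_mul]
    have h1 : p - 1 + 1 = p := by omega
    calc (∑ i ∈ range N, p ^ i) * (p - 1) + p ^ N * (p - 1) + 1
        = ((∑ i ∈ range N, p ^ i) * (p - 1) + 1) + p ^ N * (p - 1) := by ring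
      _ = p ^ N + p ^ N * (p - 1) := by rw [ih]
      _ = p ^ N * (1 + (p - 1)) := by ring
      _ = p ^ (N + 1) := by rw [show 1 + (p - 1) = p by omega, pow_succ]

end Aux

theorem numCyclicSubgroups (p n m : ℕ) (hp : p.Prime) (hn : 1 ≤ n) (hnm : n ≤ m) :
    Nat.card {S : Subgroup (Multiplicative (ZMod (p ^ n) × ZMod (p ^ m))) //
        ∃ g, S = Subgroup.zpowers g} =
      p ^ n * (m - n + 1) + 2 * ((p ^ n - 1) / (p - 1)) := by
  classical
  haveI : NeZero (p ^ n) := ⟨(pow_pos hp.pos n).ne'⟩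
  haveI : NeZero (p ^ m) := ⟨(pow_pos hp.pos m).ne'⟩
  set G := Multiplicative (ZMod (p ^ n) × ZMod (p ^ m)) with hGdef
  -- the finset of cyclic subgroups
  set I : Finset (Subgroup G) := univ.image fun g : G => Subgroup.zpowers g with hI
  -- Step A : Nat.card of the subtype is the card of I
  have stepA : Nat.card {S : Subgroup G // ∃ g, S = Subgroup.zpowers g} = I.card := by
    rw [Nat.card_congr (Equiv.subtypeEquivRight (q := fun S => S ∈ I) (fun S => by
      simp only [hI, mem_image, mem_univ, true_and]
      exact ⟨fun ⟨g, hg⟩ => ⟨g, hg.symm⟩, fun ⟨g, hg⟩ => ⟨g, hg.symm⟩⟩))]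
    exact Nat.card_eq_finsetCard I
  -- every element has order dividing p ^ m
  have hexp : ∀ g : G, g ^ (p ^ m) = 1 := by
    intro g
    have h1 : ∀ x : ZMod (p ^ n) × ZMod (p ^ m), (p ^ m) • x = 0 := by
      intro x
      have ha : ((p ^ m : ℕ) : ZMod (p ^ n)) = 0 := by
        rw [ZMod.natCast_eq_zero_iff]; exact pow_dvd_pow p hnm
      have hb : ((p ^ m : ℕ) : ZMod (p ^ m)) = 0 := ZMod.natCast_self _
      ext
      · show (p ^ m) • x.1 = 0
        rw [nsmul_eq_mul, ha, zero_mul]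
      · show (p ^ m) • x.2 = 0
        rw [nsmul_eq_mul, hb, zero_mul]
    have : Multiplicative.toAdd (g ^ (p ^ m)) = Multiplicative.toAdd (1 : G) := by
      rw [toAdd_pow, toAdd_one]
      exact h1 _
    exact Multiplicative.toAdd.injective this
  -- counts of solutions of g ^ p ^ k = 1
  set D : ℕ → ℕ := fun k => #(univ.filter fun g : G => g ^ (p ^ k) = 1) with hDdef
  have hD : ∀ k, D k = p ^ (min k n) * p ^ (min k m) := by
    intro k
    have hgcd : ∀ a b : ℕ, Nat.gcd (p ^ a) (p ^ b) = p ^ (min a b) := by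
      intro a b
      rcases le_total a b with h | h
      · rw [Nat.gcd_eq_left (pow_dvd_pow p h), min_eq_left h]
      · rw [Nat.gcd_eq_right (pow_dvd_pow p h), min_eq_right h]
    rw [hDdef]
    simp only
    rw [zmod_prod_count_pow_eq_one' (p ^ n) (p ^ m) (p ^ k), hgcd, hgcd]
  -- the number of cyclic subgroups of order p ^ k
  set c : ℕ → ℕ := fun k => #(I.filter fun S : Subgroup G => Nat.card ↥S = p ^ k) with hc
  -- Step B : total count is the sum of the c k
  have stepB : I.card = ∑ k ∈ range (m + 1), c k := by
    rw [Finset.card_eq_sum_card_fiberwise (f := fun S : Subgroup G => Nat.card ↥S)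
      (t := (range (m + 1)).image fun k => p ^ k)
      (fun S hS => by
        simp only [hI, mem_coe, mem_image, mem_univ, true_and] at hS
        obtain ⟨g, rfl⟩ := hS
        have hdvd : orderOf g ∣ p ^ m := orderOf_dvd_of_pow_eq_one (hexp g)
        obtain ⟨j, hj, hje⟩ := (Nat.dvd_prime_pow hp).mp hdvd
        simp only [coe_image, coe_range, Set.mem_image, Set.mem_Iio]
        exact ⟨j, by omega, by rw [Nat.card_zpowers, hje]⟩)]
    rw [Finset.sum_image (fun a _ b _ h => Nat.pow_right_injective hp.two_le h)]
  -- the key identity : c k * totient (p ^ k) = number of elements of order p ^ k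
  have hkey : ∀ k, #(univ.filter fun g : G => orderOf g = p ^ k) = c k * (p ^ k).totient := by
    intro k
    exact card_orderOf_eq_mul_totient' (p ^ k)
  -- c 0 = 1
  have hc0 : c 0 = 1 := by
    have h1 : #(univ.filter fun g : G => orderOf g = p ^ 0) = 1 := by
      rw [show (univ.filter fun g : G => orderOf g = p ^ 0) = {1} from by
        ext g; simp [orderOf_eq_one_iff]]
      simp
    have := hkey 0
    rw [h1] at this
    simpa [Nat.totient_one] using this.symm
  -- the recursion : N (k+1) + D k = D (k+1)
  have hrec : ∀ k, #(univ.filter fun g : G => orderOf g = p ^ (k + 1)) + D k = D (k + 1) := by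
    intro k
    have hsub : (univ.filter fun g : G => g ^ (p ^ k) = 1) ⊆
        (univ.filter fun g : G => g ^ (p ^ (k + 1)) = 1) := by
      intro g hg
      simp only [mem_filter, mem_univ, true_and] at hg ⊢
      rw [pow_succ, pow_mul, hg, one_pow]
    have hsd : (univ.filter fun g : G => orderOf g = p ^ (k + 1)) =
        (univ.filter fun g : G => g ^ (p ^ (k + 1)) = 1) \
          (univ.filter fun g : G => g ^ (p ^ k) = 1) := by
      ext g
      simp only [mem_filter, mem_univ, true_and, mem_sdiff]
      constructor
      · intro h
        refine ⟨by rw [← h]; exact pow_orderOf_eq_one g, fun hcon => ?_⟩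
        have : orderOf g ∣ p ^ k := orderOf_dvd_of_pow_eq_one hcon
        rw [h] at this
        exact absurd (Nat.le_of_dvd (pow_pos hp.pos k) this)
          (by exact Nat.not_le.mpr (Nat.pow_lt_pow_succ hp.one_lt))
      · rintro ⟨h1, h2⟩
        obtain ⟨j, hj, hje⟩ := (Nat.dvd_prime_pow hp).mp (orderOf_dvd_of_pow_eq_one h1)
        have hjk : j = k + 1 := by
          by_contra hcon
          have : j ≤ k := by omega
          exact h2 (by
            have : orderOf g ∣ p ^ k := hje ▸ pow_dvd_pow p this
            exact orderOf_dvd_iff_pow_eq_one.mp this)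
        rw [hje, hjk]
    rw [hsd, hDdef]
    exact Finset.card_sdiff_add_card_eq_card hsub
  -- value of c (k+1) for k + 1 ≤ n
  have hcval1 : ∀ k, k + 1 ≤ n → c (k + 1) = p ^ k * (p + 1) := by
    intro k hk
    have htot : (p ^ (k + 1)).totient = p ^ k * (p - 1) := by
      rw [Nat.totient_prime_pow hp (Nat.succ_pos k)]
      simp
    have h1 : c (k + 1) * (p ^ k * (p - 1)) + D k = D (k + 1) := by
      rw [← htot, ← hkey (k + 1)]; exact hrec k
    have h2 : (p ^ k * (p + 1)) * (p ^ k * (p - 1)) + D k = D (k + 1) := by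
      rw [hD k, hD (k + 1), min_eq_left (by omega : k ≤ n), min_eq_left (by omega : k ≤ m),
        min_eq_left hk, min_eq_left (by omega : k + 1 ≤ m)]
      obtain ⟨q, hq⟩ : ∃ q, p = q + 1 := ⟨p - 1, by have := hp.pos; omega⟩
      subst hq
      simp only [Nat.add_sub_cancel, pow_succ]
      ring
    have h3 : c (k + 1) * (p ^ k * (p - 1)) = (p ^ k * (p + 1)) * (p ^ k * (p - 1)) :=
      Nat.add_right_cancel (h1.trans h2.symm)
    exact Nat.eq_of_mul_eq_mul_right
      (Nat.mul_pos (pow_pos hp.pos k) (by have := hp.two_le; omega)) h3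
  -- value of c (k+1) for n < k + 1 ≤ m
  have hcval2 : ∀ k, n ≤ k → k + 1 ≤ m → c (k + 1) = p ^ n := by
    intro k hk hkm
    have htot : (p ^ (k + 1)).totient = p ^ k * (p - 1) := by
      rw [Nat.totient_prime_pow hp (Nat.succ_pos k)]
      simp
    have h1 : c (k + 1) * (p ^ k * (p - 1)) + D k = D (k + 1) := by
      rw [← htot, ← hkey (k + 1)]; exact hrec k
    have h2 : (p ^ n) * (p ^ k * (p - 1)) + D k = D (k + 1) := by
      rw [hD k, hD (k + 1), min_eq_right hk, min_eq_left (by omega : k ≤ m),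
        min_eq_right (by omega : n ≤ k + 1), min_eq_left hkm]
      obtain ⟨q, hq⟩ : ∃ q, p = q + 1 := ⟨p - 1, by have := hp.pos; omega⟩
      subst hq
      simp only [Nat.add_sub_cancel, pow_succ]
      ring
    have h3 : c (k + 1) * (p ^ k * (p - 1)) = (p ^ n) * (p ^ k * (p - 1)) :=
      Nat.add_right_cancel (h1.trans h2.symm)
    exact Nat.eq_of_mul_eq_mul_right
      (Nat.mul_pos (pow_pos hp.pos k) (by have := hp.two_le; omega)) h3
  -- now sum everything
  set T : ℕ := ∑ i ∈ range n, p ^ i with hT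
  have hTgeom : T * (p - 1) + 1 = p ^ n := geom_sum_aux hp.one_le n
  have hdiv : (p ^ n - 1) / (p - 1) = T := by
    have h1 : p ^ n - 1 = T * (p - 1) := by omega
    rw [h1, Nat.mul_div_cancel _ (by have := hp.two_le; omega)]
  have hsum : ∑ k ∈ range (m + 1), c k = T * (p + 1) + 1 + (m - n) * p ^ n := by
    rw [range_eq_Ico, ← Finset.sum_Ico_consecutive _ (Nat.zero_le (n + 1))
      (by omega : n + 1 ≤ m + 1)]
    have hfst : ∑ k ∈ Finset.Ico 0 (n + 1), c k = T * (p + 1) + 1 := by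
      rw [← Finset.range_eq_Ico, Finset.sum_range_succ', hc0,
        Finset.sum_congr rfl (fun i hi => hcval1 i (by simp only [Finset.mem_range] at hi; omega)),
        ← Finset.sum_mul]
    have hsnd : ∑ k ∈ Finset.Ico (n + 1) (m + 1), c k = (m - n) * p ^ n := by
      have hcongr : ∑ k ∈ Finset.Ico (n + 1) (m + 1), c k
          = ∑ _k ∈ Finset.Ico (n + 1) (m + 1), p ^ n := by
        refine Finset.sum_congr rfl fun k hk => ?_
        simp only [Finset.mem_Ico] at hk
        have hk1 : k - 1 + 1 = k := by omega
        rw [← hk1]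
        exact hcval2 (k - 1) (by omega) (by omega)
      rw [hcongr, Finset.sum_const, Nat.card_Ico, smul_eq_mul]
      congr 1
      omega
    rw [hfst, hsnd]
  rw [stepA, stepB, hsum, hdiv]
  have hp1 : p + 1 = (p - 1) + 2 := by have := hp.two_le; omega
  calc T * (p + 1) + 1 + (m - n) * p ^ n
      = (T * (p - 1) + 1) + 2 * T + (m - n) * p ^ n := by rw [hp1]; ring
    _ = p ^ n + 2 * T + (m - n) * p ^ n := by rw [hTgeom]
    _ = p ^ n * (m - n + 1) + 2 * T := by ring
end

section
/- The number of subgroups S of C_{p^n} × C_{p^n} such that the quotient (C_{p^n} × C_{p^n})/S is cyclic equals p^n + 2(p^n - 1)/(p - 1). -/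
namespace NCQS
variable (p n : ℕ)

def ψ (k : ℕ) (hk : k ≤ n) (c d : ZMod (p ^ k)) :
    (ZMod (p ^ n) × ZMod (p ^ n)) →+ ZMod (p ^ k) where
  toFun z := c * ZMod.castHom (pow_dvd_pow p hk) (ZMod (p ^ k)) z.1
      + d * ZMod.castHom (pow_dvd_pow p hk) (ZMod (p ^ k)) z.2
  map_zero' := by simp
  map_add' a b := by simp [map_add]; ring

lemma ψ_apply (k : ℕ) (hk : k ≤ n) (c d : ZMod (p ^ k)) (z) :
    ψ p n k hk c d z = c * ZMod.castHom (pow_dvd_pow p hk) (ZMod (p ^ k)) z.1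
      + d * ZMod.castHom (pow_dvd_pow p hk) (ZMod (p ^ k)) z.2 := rfl

variable {p n} (hp : p.Prime)
include hp

lemma ψ_surj (k : ℕ) (hk : k ≤ n) (c d : ZMod (p ^ k)) (h : IsUnit c ∨ IsUnit d) :
    Function.Surjective (ψ p n k hk c d) := by
  haveI : NeZero (p ^ k) := ⟨pow_ne_zero _ hp.ne_zero⟩
  intro z
  rcases h with ⟨u, rfl⟩ | ⟨u, rfl⟩
  · refine ⟨(((↑u⁻¹ * z : ZMod (p ^ k)).val : ZMod (p ^ n)), 0), ?_⟩
    simp only [ψ_apply, map_natCast, map_zero, mul_zero, add_zero]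
    rw [ZMod.natCast_rightInverse _, Units.mul_inv_cancel_left]
  · refine ⟨(0, ((↑u⁻¹ * z : ZMod (p ^ k)).val : ZMod (p ^ n))), ?_⟩
    simp only [ψ_apply, map_natCast, map_zero, mul_zero, zero_add]
    rw [ZMod.natCast_rightInverse _, Units.mul_inv_cancel_left]

omit hp in
lemma card_quot_ker (k : ℕ) (hk : k ≤ n) (c d : ZMod (p ^ k))
    (h : Function.Surjective (ψ p n k hk c d)) :
    Nat.card ((ZMod (p ^ n) × ZMod (p ^ n)) ⧸ (ψ p n k hk c d).ker) = p ^ k := by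
  rw [Nat.card_congr (QuotientAddGroup.quotientKerEquivOfSurjective _ h).toEquiv,
    Nat.card_zmod]

omit hp in
lemma cyclic_quot_ker (k : ℕ) (hk : k ≤ n) (c d : ZMod (p ^ k))
    (h : Function.Surjective (ψ p n k hk c d)) :
    IsAddCyclic ((ZMod (p ^ n) × ZMod (p ^ n)) ⧸ (ψ p n k hk c d).ker) := by
  have e := (QuotientAddGroup.quotientKerEquivOfSurjective _ h).symm
  exact isAddCyclic_of_surjective e e.surjective

lemma inj1 (k : ℕ) (hk : k + 1 ≤ n) (b b' : ZMod (p ^ (k+1)))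
    (h : (ψ p n (k+1) hk 1 b).ker = (ψ p n (k+1) hk 1 b').ker) : b = b' := by
  haveI : NeZero (p ^ (k+1)) := ⟨pow_ne_zero _ hp.ne_zero⟩
  have hz : ((-(b.val : ZMod (p ^ n)), 1) : ZMod (p^n) × ZMod (p^n)) ∈ (ψ p n (k+1) hk 1 b).ker := by
    simp only [AddMonoidHom.mem_ker, ψ_apply, map_neg, map_natCast, map_one, mul_one, one_mul,
      ZMod.natCast_rightInverse b]
    exact neg_add_cancel b
  rw [h] at hz
  simp only [AddMonoidHom.mem_ker, ψ_apply, map_neg, map_natCast, map_one, mul_one, one_mul,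
    ZMod.natCast_rightInverse b] at hz
  exact neg_add_eq_zero.mp hz

lemma inj2 (k : ℕ) (hk : k + 1 ≤ n) (a a' : ZMod (p ^ (k+1)))
    (h : (ψ p n (k+1) hk a 1).ker = (ψ p n (k+1) hk a' 1).ker) : a = a' := by
  haveI : NeZero (p ^ (k+1)) := ⟨pow_ne_zero _ hp.ne_zero⟩
  have hz : ((1, -(a.val : ZMod (p ^ n))) : ZMod (p^n) × ZMod (p^n)) ∈ (ψ p n (k+1) hk a 1).ker := by
    simp only [AddMonoidHom.mem_ker, ψ_apply, map_neg, map_natCast, map_one, mul_one, one_mul,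
      ZMod.natCast_rightInverse a]
    exact add_neg_cancel a
  rw [h] at hz
  simp only [AddMonoidHom.mem_ker, ψ_apply, map_neg, map_natCast, map_one, mul_one, one_mul,
    ZMod.natCast_rightInverse a] at hz
  exact (add_neg_eq_zero.mp hz).symm

/-- Kernels of type-1 and type-2 forms are distinct (when p ∣ a.val). -/
lemma inj12 (k : ℕ) (hk : k + 1 ≤ n) (b a : ZMod (p ^ (k+1))) (ha : p ∣ a.val) :
    (ψ p n (k+1) hk 1 b).ker ≠ (ψ p n (k+1) hk a 1).ker := by
  haveI : NeZero (p ^ (k+1)) := ⟨pow_ne_zero _ hp.ne_zero⟩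
  intro h
  have hz : ((((p ^ k : ℕ) : ZMod (p ^ n)), 0) : ZMod (p^n) × ZMod (p^n)) ∈ (ψ p n (k+1) hk a 1).ker := by
    obtain ⟨t, ht⟩ := ha
    have ha' : a = (p : ZMod (p ^ (k+1))) * (t : ZMod (p ^ (k+1))) := by
      rw [← Nat.cast_mul, ← ht, ZMod.natCast_rightInverse a]
    simp only [AddMonoidHom.mem_ker, ψ_apply, map_natCast, map_zero, mul_zero, add_zero, ha']
    rw [mul_comm (p : ZMod (p ^ (k+1))), mul_assoc, ← Nat.cast_mul, ← pow_succ',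
      ZMod.natCast_self, mul_zero]
  rw [← h] at hz
  simp only [AddMonoidHom.mem_ker, ψ_apply, map_natCast, map_zero, mul_zero, add_zero,
    one_mul] at hz
  rw [ZMod.natCast_eq_zero_iff] at hz
  exact absurd ((Nat.pow_dvd_pow_iff_le_right hp.one_lt).mp hz) (by omega)
lemma dvd_val_mul (k : ℕ) (hk : 1 ≤ k) (x : ZMod (p ^ k)) :
    p ∣ ((p : ZMod (p ^ k)) * x).val := by
  haveI : NeZero (p ^ k) := ⟨pow_ne_zero _ hp.ne_zero⟩
  have h1 : ((p : ZMod (p ^ k)) * x) = ((p * x.val : ℕ) : ZMod (p ^ k)) := by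
    rw [Nat.cast_mul, ZMod.natCast_rightInverse x]
  rw [h1, ZMod.val_natCast]
  exact (Nat.dvd_mod_iff (dvd_pow_self p (by omega))).mpr ⟨x.val, rfl⟩

lemma not_unit_dvd (k : ℕ) (hk : 1 ≤ k) (c : ZMod (p ^ k)) (hc : ¬ IsUnit c) :
    p ∣ c.val := by
  haveI : NeZero (p ^ k) := ⟨pow_ne_zero _ hp.ne_zero⟩
  rw [← ZMod.natCast_rightInverse c, ZMod.isUnit_iff_coprime,
    Nat.coprime_pow_right_iff (by omega)] at hc
  rw [Nat.coprime_comm] at hc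
  exact (hp.coprime_iff_not_dvd.not_left).mp (by simpa using hc)

lemma surj_main (T : AddSubgroup (ZMod (p ^ n) × ZMod (p ^ n)))
    (hT : IsAddCyclic ((ZMod (p ^ n) × ZMod (p ^ n)) ⧸ T)) :
    T = ⊤ ∨ ∃ (k : ℕ) (hk : k + 1 ≤ n),
      (∃ b, T = (ψ p n (k+1) hk 1 b).ker) ∨
      (∃ a, p ∣ a.val ∧ T = (ψ p n (k+1) hk a 1).ker) := by
  haveI : NeZero (p ^ n) := ⟨pow_ne_zero _ hp.ne_zero⟩
  set A := ZMod (p ^ n) × ZMod (p ^ n) with hA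
  have hsmul : ∀ x : ZMod (p ^ n), (p ^ n) • x = 0 := fun x => by
    rw [nsmul_eq_mul, ZMod.natCast_self, zero_mul]
  have hexp : AddMonoid.exponent (A ⧸ T) ∣ p ^ n := by
    apply AddMonoid.exponent_dvd_of_forall_nsmul_eq_zero
    intro g
    induction g using QuotientAddGroup.induction_on with
    | H a => rw [← QuotientAddGroup.mk_nsmul]
             congr 1
             ext <;> exact hsmul _
  rw [IsAddCyclic.exponent_eq_card] at hexp
  obtain ⟨k, hkn, hk⟩ := (Nat.dvd_prime_pow hp).mp hexp
  match k, hkn, hk with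
  | 0, _, hk =>
    left
    have : Subsingleton (A ⧸ T) := by
      rw [pow_zero] at hk
      exact (Nat.card_eq_one_iff_unique.mp hk).1
    ext x
    simp only [AddSubgroup.mem_top, iff_true]
    rw [← QuotientAddGroup.eq_zero_iff]
    exact Subsingleton.elim _ _
  | (k+1), hkn, hk =>
    right
    refine ⟨k, hkn, ?_⟩
    have e : (A ⧸ T) ≃+ ZMod (p ^ (k+1)) := hk ▸ (zmodAddCyclicAddEquiv hT).symm
    set ψ' : A →+ ZMod (p ^ (k+1)) := e.toAddMonoidHom.comp (QuotientAddGroup.mk' T) with hψ'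
    have hker : ψ'.ker = T := by
      ext x
      rw [AddMonoidHom.mem_ker, hψ']
      simp only [AddMonoidHom.coe_comp, Function.comp_apply, AddEquiv.coe_toAddMonoidHom]
      rw [show (0 : ZMod (p ^ (k+1))) = e 0 by simp, e.apply_eq_iff_eq,
        QuotientAddGroup.mk'_apply, QuotientAddGroup.eq_zero_iff]
    have hsurj' : Function.Surjective ψ' :=
      e.surjective.comp (QuotientAddGroup.mk'_surjective T)
    set c := ψ' ((1 : ZMod (p^n)), (0 : ZMod (p^n))) with hc
    set d := ψ' ((0 : ZMod (p^n)), (1 : ZMod (p^n))) with hd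
    have hψeq : ψ' = ψ p n (k+1) hkn c d := by
      ext z
      have hz : z = z.1.val • ((1 : ZMod (p^n)), (0 : ZMod (p^n)))
          + z.2.val • ((0 : ZMod (p^n)), (1 : ZMod (p^n))) := by
        ext <;> simp [ZMod.natCast_rightInverse z.1, ZMod.natCast_rightInverse z.2]
      rw [ψ_apply]
      conv_lhs => rw [hz]
      rw [map_add, map_nsmul, map_nsmul, nsmul_eq_mul, nsmul_eq_mul, ← hc, ← hd]
      rw [ZMod.castHom_apply, ZMod.castHom_apply, ← ZMod.natCast_val, ← ZMod.natCast_val]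
      ring
    have hud : IsUnit c ∨ IsUnit d := by
      by_contra hcd
      push_neg at hcd
      obtain ⟨hc1, hd1⟩ := hcd
      obtain ⟨tc, htc⟩ := not_unit_dvd hp (k+1) (by omega) c hc1
      obtain ⟨td, htd⟩ := not_unit_dvd hp (k+1) (by omega) d hd1
      obtain ⟨z, hz⟩ := hsurj' 1
      rw [hψeq, ψ_apply] at hz
      have hcc : c = (p : ZMod (p ^ (k+1))) * (tc : ZMod (p ^ (k+1))) := by
        haveI : NeZero (p ^ (k+1)) := ⟨pow_ne_zero _ hp.ne_zero⟩
        rw [← Nat.cast_mul, ← htc, ZMod.natCast_rightInverse c]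
      have hdd : d = (p : ZMod (p ^ (k+1))) * (td : ZMod (p ^ (k+1))) := by
        haveI : NeZero (p ^ (k+1)) := ⟨pow_ne_zero _ hp.ne_zero⟩
        rw [← Nat.cast_mul, ← htd, ZMod.natCast_rightInverse d]
      rw [hcc, hdd, mul_assoc, mul_assoc, ← mul_add] at hz
      have : IsUnit (p : ZMod (p ^ (k+1))) := IsUnit.of_mul_eq_one _ hz
      rw [ZMod.isUnit_iff_coprime, Nat.coprime_pow_right_iff (by omega),
        Nat.Coprime, Nat.gcd_self] at this
      exact hp.one_lt.ne' this
    haveI : NeZero (p ^ (k + 1)) := ⟨pow_ne_zero _ hp.ne_zero⟩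
    by_cases hcu : IsUnit c
    · left
      obtain ⟨u, hu⟩ := hcu
      refine ⟨(↑u⁻¹ : ZMod (p ^ (k + 1))) * d, ?_⟩
      have key : ∀ X Y : ZMod (p ^ (k + 1)),
          c * X + d * Y = ↑u * (1 * X + ((↑u⁻¹ : ZMod (p ^ (k + 1))) * d) * Y) := by
        intro X Y
        rw [one_mul, mul_add, mul_assoc (↑u⁻¹ : ZMod (p ^ (k + 1))) d Y,
          Units.mul_inv_cancel_left, hu]
      rw [← hker, hψeq]
      ext z
      rw [AddMonoidHom.mem_ker, AddMonoidHom.mem_ker, ψ_apply, ψ_apply, key,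
        Units.mul_right_eq_zero]
    · right
      obtain ⟨u, hu⟩ := hud.resolve_left hcu
      obtain ⟨tc, htc⟩ := not_unit_dvd hp (k + 1) (by omega) c hcu
      have hcc : c = (p : ZMod (p ^ (k + 1))) * (tc : ZMod (p ^ (k + 1))) := by
        rw [← Nat.cast_mul, ← htc, ZMod.natCast_rightInverse c]
      set a := (↑u⁻¹ : ZMod (p ^ (k + 1))) * c with ha
      have hpa : p ∣ a.val := by
        have : a = (p : ZMod (p ^ (k + 1))) * ((↑u⁻¹ : ZMod (p ^ (k + 1))) * ↑tc) := by
          rw [ha, hcc]; ring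
        rw [this]
        exact dvd_val_mul hp (k + 1) (by omega) _
      refine ⟨a, hpa, ?_⟩
      have key : ∀ X Y : ZMod (p ^ (k + 1)),
          c * X + d * Y = ↑u * (a * X + 1 * Y) := by
        intro X Y
        rw [one_mul, mul_add, ha, ← mul_assoc, ← mul_assoc, Units.mul_inv,
          one_mul, hu]
      rw [← hker, hψeq]
      ext z
      rw [AddMonoidHom.mem_ker, AddMonoidHom.mem_ker, ψ_apply, ψ_apply, key,
        Units.mul_right_eq_zero]
end NCQS
namespace NCQS
variable {p : ℕ}
def E2 (k : ℕ) (hp : p.Prime) : {a : ZMod (p ^ (k + 1)) // p ∣ a.val} ≃ ZMod (p ^ k) :=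
  haveI h1 : NeZero (p ^ (k + 1)) := ⟨pow_ne_zero _ hp.ne_zero⟩
  haveI h2 : NeZero (p ^ k) := ⟨pow_ne_zero _ hp.ne_zero⟩
  { toFun := fun a => ((a.1.val / p : ℕ) : ZMod (p ^ k))
    invFun := fun b => ⟨((p * b.val : ℕ) : ZMod (p ^ (k + 1))), by
      rw [ZMod.val_natCast_of_lt (by
        calc p * b.val < p * p ^ k := (mul_lt_mul_iff_right₀ hp.pos).mpr (ZMod.val_lt b)
          _ = p ^ (k + 1) := (pow_succ' p k).symm)]
      exact ⟨b.val, rfl⟩⟩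
    left_inv := by
      rintro ⟨a, ha⟩
      apply Subtype.ext
      dsimp only
      rw [ZMod.val_natCast_of_lt (show a.val / p < p ^ k from Nat.div_lt_of_lt_mul
          (by rw [← pow_succ']; exact ZMod.val_lt a)),
        Nat.mul_div_cancel' ha, ZMod.natCast_rightInverse a]
    right_inv := by
      intro b
      dsimp only
      rw [ZMod.val_natCast_of_lt (by
        calc p * b.val < p * p ^ k := (mul_lt_mul_iff_right₀ hp.pos).mpr (ZMod.val_lt b)
          _ = p ^ (k + 1) := (pow_succ' p k).symm),
        Nat.mul_div_cancel_left _ hp.pos, ZMod.natCast_rightInverse b] }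

def Idx (p n : ℕ) : Type :=
  (Unit ⊕ (Σ k : Fin n, ZMod (p ^ (k.1 + 1)))) ⊕ (Σ k : Fin n, {a : ZMod (p ^ (k.1 + 1)) // p ∣ a.val})

lemma card_idx (n : ℕ) (hp : p.Prime) :
    Nat.card (Idx p n) = 1 + (∑ k ∈ Finset.range n, p ^ (k + 1)) + ∑ k ∈ Finset.range n, p ^ k := by
  haveI i1 : ∀ k : Fin n, NeZero (p ^ (k.1 + 1)) := fun k => ⟨pow_ne_zero _ hp.ne_zero⟩
  haveI i2 : ∀ k : Fin n, Fintype (ZMod (p ^ (k.1 + 1))) := fun k => ZMod.fintype _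
  haveI i4 : ∀ k : Fin n, Fintype (ZMod (p ^ k.1)) := fun k =>
    @ZMod.fintype _ ⟨pow_ne_zero _ hp.ne_zero⟩
  rw [Idx, Nat.card_sum, Nat.card_sum, Nat.card_unique]
  rw [Nat.card_eq_fintype_card (α := Σ k : Fin n, ZMod (p ^ (k.1 + 1))),
    Nat.card_eq_fintype_card (α := Σ k : Fin n, {a : ZMod (p ^ (k.1 + 1)) // p ∣ a.val}),
    Fintype.card_sigma, Fintype.card_sigma]
  congr 1
  · congr 1
    rw [Finset.sum_range fun k => p ^ (k + 1)]
    apply Finset.sum_congr rfl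
    intro k _
    rw [← Nat.card_eq_fintype_card, Nat.card_zmod]
  · rw [Finset.sum_range fun k => p ^ k]
    apply Finset.sum_congr rfl
    intro k _
    rw [Fintype.card_congr (E2 k.1 hp), ← Nat.card_eq_fintype_card, Nat.card_zmod]
end NCQS

lemma geom (p : ℕ) (hp : p.Prime) : ∀ m : ℕ,
    (p - 1) * (∑ k ∈ Finset.range m, p ^ k) = p ^ m - 1 := by
  intro m
  induction m with
  | zero => simp
  | succ m ih =>
    rw [Finset.sum_range_succ, Nat.mul_add, ih]
    have hpm : 1 ≤ p ^ m := Nat.one_le_pow _ _ hp.pos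
    have h4 : (p - 1) * p ^ m = p * p ^ m - p ^ m := by rw [Nat.sub_mul, one_mul]
    have h5 : p ^ (m + 1) = p * p ^ m := pow_succ' p m
    have h6 : p ^ m ≤ p * p ^ m := Nat.le_mul_of_pos_left _ hp.pos
    omega

lemma arith {p : ℕ} (hp : p.Prime) (n : ℕ) :
    1 + (∑ k ∈ Finset.range n, p ^ (k + 1)) + ∑ k ∈ Finset.range n, p ^ k =
      p ^ n + 2 * ((p ^ n - 1) / (p - 1)) := by
  have h1 : 1 + ∑ k ∈ Finset.range n, p ^ (k + 1)
      = p ^ n + ∑ k ∈ Finset.range n, p ^ k := by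
    have e1 := Finset.sum_range_succ (fun k => p ^ k) n
    have e2 := Finset.sum_range_succ' (fun k => p ^ k) n
    rw [e1] at e2
    simp only [pow_zero] at e2
    omega
  have h3 : (p ^ n - 1) / (p - 1) = ∑ k ∈ Finset.range n, p ^ k := by
    rw [← geom p hp n, Nat.mul_div_cancel_left _ (by have := hp.two_le; omega)]
  omega
namespace NCQS2
open NCQS
variable {p n : ℕ}

lemma card_top {A : Type*} [AddCommGroup A] :
    Nat.card (A ⧸ (⊤ : AddSubgroup A)) = 1 :=
  haveI := QuotientAddGroup.subsingleton_quotient_top (G := A)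
  Nat.card_eq_one_iff_unique.mpr ⟨this, ⟨0⟩⟩

noncomputable def F (hp : p.Prime) : Idx p n →
    {T : AddSubgroup (ZMod (p ^ n) × ZMod (p ^ n)) //
      IsAddCyclic ((ZMod (p ^ n) × ZMod (p ^ n)) ⧸ T)}
  | .inl (.inl _) => ⟨⊤, by
      haveI := QuotientAddGroup.subsingleton_quotient_top
        (G := ZMod (p ^ n) × ZMod (p ^ n))
      infer_instance⟩
  | .inl (.inr ⟨k, b⟩) => ⟨(ψ p n (k.1 + 1) k.2 1 b).ker,
      cyclic_quot_ker _ _ _ _ (ψ_surj hp _ _ _ _ (Or.inl isUnit_one))⟩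
  | .inr ⟨k, a⟩ => ⟨(ψ p n (k.1 + 1) k.2 a.1 1).ker,
      cyclic_quot_ker _ _ _ _ (ψ_surj hp _ _ _ _ (Or.inr isUnit_one))⟩

end NCQS2

namespace NCQS2
open NCQS
variable {p n : ℕ}

lemma F_inj (hp : p.Prime) : Function.Injective (F (n := n) hp) := by
  intro i j h
  have hv := congrArg Subtype.val h
  have hcard : ∀ (k : Fin n) (c d : ZMod (p ^ (k.1 + 1))) (h : IsUnit c ∨ IsUnit d),
      Nat.card ((ZMod (p ^ n) × ZMod (p ^ n)) ⧸ (ψ p n (k.1 + 1) k.2 c d).ker)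
        = p ^ (k.1 + 1) := fun k c d hcd =>
    card_quot_ker _ _ _ _ (ψ_surj hp _ _ _ _ hcd)
  rcases i with (⟨⟩ | ⟨k, b⟩) | ⟨k, a⟩ <;> rcases j with (⟨⟩ | ⟨k', b'⟩) | ⟨k', a'⟩ <;>
    simp only [F] at hv
  · rfl
  · exfalso
    have h1 := hcard k' 1 b' (Or.inl isUnit_one)
    rw [← hv, card_top] at h1
    exact absurd h1.symm (Nat.one_lt_pow (Nat.succ_ne_zero _) hp.one_lt).ne'
  · exfalso
    have h1 := hcard k' a'.1 1 (Or.inr isUnit_one)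
    rw [← hv, card_top] at h1
    exact absurd h1.symm (Nat.one_lt_pow (Nat.succ_ne_zero _) hp.one_lt).ne'
  · exfalso
    have h1 := hcard k 1 b (Or.inl isUnit_one)
    rw [hv, card_top] at h1
    exact absurd h1.symm (Nat.one_lt_pow (Nat.succ_ne_zero _) hp.one_lt).ne'
  · obtain rfl : k = k' := by
      have h1 := hcard k 1 b (Or.inl isUnit_one)
      have h2 := hcard k' 1 b' (Or.inl isUnit_one)
      rw [hv, h2] at h1
      exact Fin.ext (by have := Nat.pow_right_injective hp.two_le h1; omega)
    obtain rfl := inj1 hp _ _ b b' hv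
    rfl
  · exfalso
    obtain rfl : k = k' := by
      have h1 := hcard k 1 b (Or.inl isUnit_one)
      have h2 := hcard k' a'.1 1 (Or.inr isUnit_one)
      rw [hv, h2] at h1
      exact Fin.ext (by have := Nat.pow_right_injective hp.two_le h1; omega)
    exact inj12 hp _ _ b a'.1 a'.2 hv
  · exfalso
    have h1 := hcard k a.1 1 (Or.inr isUnit_one)
    rw [hv, card_top] at h1
    exact absurd h1.symm (Nat.one_lt_pow (Nat.succ_ne_zero _) hp.one_lt).ne'
  · exfalso
    obtain rfl : k = k' := by
      have h1 := hcard k a.1 1 (Or.inr isUnit_one)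
      have h2 := hcard k' 1 b' (Or.inl isUnit_one)
      rw [hv, h2] at h1
      exact Fin.ext (by have := Nat.pow_right_injective hp.two_le h1; omega)
    exact inj12 hp _ _ b' a.1 a.2 hv.symm
  · obtain rfl : k = k' := by
      have h1 := hcard k a.1 1 (Or.inr isUnit_one)
      have h2 := hcard k' a'.1 1 (Or.inr isUnit_one)
      rw [hv, h2] at h1
      exact Fin.ext (by have := Nat.pow_right_injective hp.two_le h1; omega)
    obtain rfl : a = a' := Subtype.ext (inj2 hp _ _ a.1 a'.1 hv)
    rfl

lemma F_surj (hp : p.Prime) : Function.Surjective (F (n := n) hp) := by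
  rintro ⟨T, hT⟩
  rcases surj_main hp T hT with rfl | ⟨k, hk, ⟨b, rfl⟩ | ⟨a, hpa, rfl⟩⟩
  · exact ⟨.inl (.inl ()), rfl⟩
  · exact ⟨.inl (.inr ⟨⟨k, hk⟩, b⟩), rfl⟩
  · exact ⟨.inr ⟨⟨k, hk⟩, ⟨a, hpa⟩⟩, rfl⟩

end NCQS2

lemma quot_iff' {A : Type*} [AddCommGroup A] (T : AddSubgroup A) :
    IsCyclic (Multiplicative A ⧸ AddSubgroup.toSubgroup T) ↔ IsAddCyclic (A ⧸ T) := by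
  let φ : Multiplicative A →* Multiplicative (A ⧸ T) :=
    AddMonoidHom.toMultiplicative (QuotientAddGroup.mk' T)
  have hsurj : Function.Surjective φ := fun x => by
    obtain ⟨a, ha⟩ := QuotientAddGroup.mk'_surjective T x.toAdd
    exact ⟨Multiplicative.ofAdd a, by simpa [φ] using congrArg Multiplicative.ofAdd ha⟩
  have hker : φ.ker = AddSubgroup.toSubgroup T := by
    ext x
    simp [φ, MonoidHom.mem_ker, AddSubgroup.toSubgroup, QuotientAddGroup.eq_zero_iff]
  have e : (Multiplicative A ⧸ AddSubgroup.toSubgroup T) ≃* Multiplicative (A ⧸ T) :=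
    (QuotientGroup.quotientMulEquivOfEq hker.symm).trans
      (QuotientGroup.quotientKerEquivOfSurjective φ hsurj)
  rw [← isCyclic_multiplicative_iff]
  exact ⟨fun h => isCyclic_of_surjective e e.surjective,
    fun h => isCyclic_of_surjective e.symm e.symm.surjective⟩

theorem numCyclicQuotientSubgroups (p n : ℕ) (hp : p.Prime) (hn : 1 ≤ n) :
    Nat.card {S : Subgroup (Multiplicative (ZMod (p ^ n) × ZMod (p ^ n))) //
        IsCyclic (Multiplicative (ZMod (p ^ n) × ZMod (p ^ n)) ⧸ S)} =
      p ^ n + 2 * ((p ^ n - 1) / (p - 1)) := by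
  have e1 : {S : Subgroup (Multiplicative (ZMod (p ^ n) × ZMod (p ^ n))) //
        IsCyclic (Multiplicative (ZMod (p ^ n) × ZMod (p ^ n)) ⧸ S)} ≃
      {T : AddSubgroup (ZMod (p ^ n) × ZMod (p ^ n)) //
        IsAddCyclic ((ZMod (p ^ n) × ZMod (p ^ n)) ⧸ T)} :=
    (Equiv.subtypeEquiv AddSubgroup.toSubgroup.toEquiv (fun T => (quot_iff' T).symm)).symm
  rw [Nat.card_congr e1,
    ← Nat.card_eq_of_bijective (NCQS2.F hp) ⟨NCQS2.F_inj hp, NCQS2.F_surj hp⟩,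
    NCQS.card_idx n hp, arith hp n]
end

section
/- Let P = C_{p^n} × C_{p^n} with generators a and b. Every subgroup of P with cyclic quotient of index p^s (for 1 ≤ s ≤ n) is of the form ⟨a^ν b, a^{p^s}⟩ for some 0 ≤ ν < p^s, or of the form ⟨a b^μ, b^{p^s}⟩ for some 0 ≤ μ < p^s with p dividing μ. -/
lemma aux_eq_of_gen {G : Type*} [CommGroup G] [Finite G] (S K : Subgroup G)
    (hKS : K ≤ S) {m : ℕ} (hm : 0 < m) (hidx : S.index = m) (g : G)
    (hg : g ^ m ∈ K) (hgen : ∀ x : G, ∃ z : ℤ, x * (g ^ z)⁻¹ ∈ K) : S = K := by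
  haveI : NeZero m := ⟨hm.ne'⟩
  have hsurj : Function.Surjective
      (fun c : ZMod m => ((g : G) : G ⧸ K) ^ (c.val : ℕ)) := by
    intro q
    obtain ⟨x, rfl⟩ := QuotientGroup.mk_surjective q
    obtain ⟨z, hz⟩ := hgen x
    have hx : (x : G ⧸ K) = ((g : G) : G ⧸ K) ^ z := by
      rw [← QuotientGroup.mk_zpow, QuotientGroup.eq]
      have h2 : (x⁻¹ * g ^ z) = (x * (g ^ z)⁻¹)⁻¹ := by
        rw [mul_inv_rev, inv_inv, mul_comm]
      rw [h2]
      exact inv_mem hz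
    refine ⟨(z : ZMod m), ?_⟩
    have hdvd : (m : ℤ) ∣ z - ((z : ZMod m).val : ℤ) := by
      rw [← ZMod.intCast_zmod_eq_zero_iff_dvd]
      push_cast
      simp [ZMod.natCast_val, ZMod.cast_id]
    obtain ⟨q, hq⟩ := hdvd
    have hgm1 : ((g : G) : G ⧸ K) ^ m = 1 := by
      rw [← QuotientGroup.mk_pow]; exact (QuotientGroup.eq_one_iff _).2 hg
    have hzz : ((g : G) : G ⧸ K) ^ z = ((g : G) : G ⧸ K) ^ (((z : ZMod m)).val : ℤ) := by
      conv_lhs => rw [show z = ((z : ZMod m).val : ℤ) + m * q by omega]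
      rw [zpow_add, zpow_mul, zpow_natCast, zpow_natCast, hgm1, one_zpow, mul_one]
    show ((g : G) : G ⧸ K) ^ (((z : ZMod m)).val : ℕ) = (x : G ⧸ K)
    rw [← zpow_natCast, ← hzz, ← hx]
  have hcard : Nat.card (G ⧸ K) ≤ m := by
    calc Nat.card (G ⧸ K) ≤ Nat.card (ZMod m) := Nat.card_le_card_of_surjective _ hsurj
    _ = m := Nat.card_zmod m
  have hKidx : K.index = m := by
    have h1 : S.index ∣ K.index := Subgroup.index_dvd_of_le hKS
    rw [hidx] at h1
    have h2 : K.index ≠ 0 := Subgroup.index_ne_zero_of_finite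
    rw [Subgroup.index_eq_card]
    exact le_antisymm hcard (Nat.le_of_dvd (Nat.pos_of_ne_zero (Subgroup.index_eq_card K ▸ h2)) (Subgroup.index_eq_card K ▸ h1))
  have hrel : K.relIndex S = 1 := by
    have h := Subgroup.relIndex_mul_index hKS
    rw [hidx, hKidx] at h
    have h' : K.relIndex S * m = 1 * m := by rw [one_mul]; exact h
    exact mul_right_cancel₀ hm.ne' h'
  exact le_antisymm (Subgroup.relIndex_eq_one.mp hrel) hKS

theorem cyclicQuotient_subgroups_form (p n : ℕ) (hp : p.Prime) (hn : 1 ≤ n)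
    (a b : Multiplicative (ZMod (p ^ n) × ZMod (p ^ n)))
    (ha : a = Multiplicative.ofAdd ((1 : ZMod (p ^ n)), (0 : ZMod (p ^ n))))
    (hb : b = Multiplicative.ofAdd ((0 : ZMod (p ^ n)), (1 : ZMod (p ^ n))))
    (S : Subgroup (Multiplicative (ZMod (p ^ n) × ZMod (p ^ n))))
    (hcyc : IsCyclic (Multiplicative (ZMod (p ^ n) × ZMod (p ^ n)) ⧸ S))
    (s : ℕ) (hs1 : 1 ≤ s) (hsn : s ≤ n) (hidx : S.index = p ^ s) :
    (∃ ν : ℕ, ν < p ^ s ∧ S = Subgroup.closure {a ^ ν * b, a ^ (p ^ s)}) ∨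
    (∃ μ : ℕ, μ < p ^ s ∧ p ∣ μ ∧ S = Subgroup.closure {a * b ^ μ, b ^ (p ^ s)}) := by
  haveI : NeZero (p ^ n) := ⟨pow_ne_zero n hp.ne_zero⟩
  haveI : NeZero (p ^ s) := ⟨pow_ne_zero s hp.ne_zero⟩
  haveI : Fact (1 < p ^ s) := ⟨Nat.one_lt_pow (by omega) hp.one_lt⟩
  -- the quotient has cardinality p ^ s
  have hQ : Nat.card (Multiplicative (ZMod (p ^ n) × ZMod (p ^ n)) ⧸ S) = p ^ s := by rw [← Subgroup.index_eq_card, hidx]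
  have e0 := (zmodCyclicMulEquiv hcyc).symm
  rw [hQ] at e0
  set φ : Multiplicative (ZMod (p ^ n) × ZMod (p ^ n)) →* Multiplicative (ZMod (p ^ s)) :=
    e0.toMonoidHom.comp (QuotientGroup.mk' S) with hφ
  have hker : ∀ x : Multiplicative (ZMod (p ^ n) × ZMod (p ^ n)), x ∈ S ↔ φ x = 1 := by
    intro x
    rw [show φ x = e0 ((QuotientGroup.mk' S) x) from rfl, EmbeddingLike.map_eq_one_iff,
      QuotientGroup.mk'_apply, QuotientGroup.eq_one_iff]
  have hφsurj : Function.Surjective φ :=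
    e0.surjective.comp (QuotientGroup.mk'_surjective S)
  set A : ZMod (p ^ s) := Multiplicative.toAdd (φ a) with hA
  set B : ZMod (p ^ s) := Multiplicative.toAdd (φ b) with hB
  -- decomposition of an arbitrary element
  have hdec : ∀ x : Multiplicative (ZMod (p ^ n) × ZMod (p ^ n)), x = a ^ (Multiplicative.toAdd x).1.val *
      b ^ (Multiplicative.toAdd x).2.val := by
    intro x
    subst ha hb
    apply Multiplicative.toAdd.injective
    simp only [toAdd_mul, toAdd_pow, toAdd_ofAdd, Prod.smul_mk, smul_zero, Prod.mk_add_mk,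
      add_zero, zero_add, nsmul_eq_mul, mul_one]
    rw [ZMod.natCast_val, ZMod.cast_id, ZMod.natCast_val, ZMod.cast_id]
  -- surjectivity gives a combination equal to 1
  have hrel : ∃ m k : ℕ, (m : ZMod (p ^ s)) * A + (k : ZMod (p ^ s)) * B = 1 := by
    obtain ⟨x, hx⟩ := hφsurj (Multiplicative.ofAdd 1)
    refine ⟨(Multiplicative.toAdd x).1.val, (Multiplicative.toAdd x).2.val, ?_⟩
    rw [hdec x] at hx
    have := congrArg Multiplicative.toAdd hx
    simpa [map_mul, map_pow, toAdd_mul, toAdd_pow, nsmul_eq_mul] using this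
  -- nonunits are divisible by p
  have hnonunit : ∀ C : ZMod (p ^ s), ¬IsUnit C → (p : ZMod (p ^ s)) ∣ C := by
    intro C hC
    have hpd : p ∣ C.val := by
      by_contra hpd
      apply hC
      have h1 : IsUnit ((C.val : ℕ) : ZMod (p ^ s)) :=
        (ZMod.isUnit_iff_coprime _ _).2
          (Nat.Coprime.pow_right s (Nat.coprime_comm.mp (hp.coprime_iff_not_dvd.2 hpd)))
      rwa [ZMod.natCast_val, ZMod.cast_id] at h1
    obtain ⟨t, ht⟩ := hpd
    refine ⟨(t : ZMod (p ^ s)), ?_⟩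
    calc C = ((C.val : ℕ) : ZMod (p ^ s)) := by rw [ZMod.natCast_val, ZMod.cast_id]
    _ = ((p * t : ℕ) : ZMod (p ^ s)) := by rw [← ht]
    _ = (p : ZMod (p ^ s)) * t := by push_cast; ring
  -- an element divisible by p has value divisible by p
  have hpdvd : ∀ x : ZMod (p ^ s), (p : ZMod (p ^ s)) ∣ x → p ∣ x.val := by
    rintro x ⟨c, rfl⟩
    have h1 : (p : ZMod (p ^ s)) * c = ((p * c.val : ℕ) : ZMod (p ^ s)) := by
      push_cast [ZMod.natCast_val, ZMod.cast_id]
      ring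
    rw [h1, ZMod.val_natCast]
    exact (Nat.dvd_mod_iff (dvd_pow_self p (by omega))).2 ⟨c.val, rfl⟩
  -- dichotomy
  have hdich : IsUnit A ∨ (¬IsUnit A ∧ IsUnit B) := by
    by_cases hAu : IsUnit A
    · exact Or.inl hAu
    refine Or.inr ⟨hAu, ?_⟩
    by_contra hBu
    obtain ⟨cA, hcA⟩ := hnonunit A hAu
    obtain ⟨cB, hcB⟩ := hnonunit B hBu
    obtain ⟨m, k, hmk⟩ := hrel
    have h1 : (p : ZMod (p ^ s)) ∣ 1 := by
      rw [← hmk, hcA, hcB]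
      exact ⟨m * cA + k * cB, by ring⟩
    have h2 : p ∣ (1 : ZMod (p ^ s)).val := hpdvd _ h1
    rw [ZMod.val_one] at h2
    exact hp.one_lt.ne' (Nat.eq_one_of_dvd_one h2)
  -- common fact : pth powers of a and b lie in S
  have hSa : a ^ (p ^ s) ∈ S := by have h := S.pow_index_mem a; rwa [hidx] at h
  have hSb : b ^ (p ^ s) ∈ S := by have h := S.pow_index_mem b; rwa [hidx] at h
  rcases hdich with hAu | ⟨hAu, hBu⟩
  · -- first case : ν with ν A + B = 0
    set u := hAu.unit with hu
    set ν : ℕ := ((↑u⁻¹ * (-B) : ZMod (p ^ s))).val with hν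
    have hνcast : ((ν : ℕ) : ZMod (p ^ s)) = ↑u⁻¹ * (-B) := by
      rw [hν, ZMod.natCast_val, ZMod.cast_id]
    have hcomb : ((ν : ℕ) : ZMod (p ^ s)) * A + B = 0 := by
      rw [hνcast, ← hAu.unit_spec]
      have : (↑u⁻¹ * -B) * ↑u = -B := by
        rw [mul_comm, ← mul_assoc, Units.mul_inv, one_mul]
      rw [this]; ring
    have hS1 : a ^ ν * b ∈ S := by
      rw [hker]
      have : Multiplicative.toAdd (φ (a ^ ν * b)) = 0 := by
        simpa [map_mul, map_pow, toAdd_mul, toAdd_pow, nsmul_eq_mul] using hcomb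
      apply Multiplicative.toAdd.injective
      simpa using this
    set K := Subgroup.closure {a ^ ν * b, a ^ (p ^ s)} with hK
    have hKS : K ≤ S := by
      rw [hK, Subgroup.closure_le]
      rintro x (rfl | rfl)
      exacts [hS1, hSa]
    refine Or.inl ⟨ν, ZMod.val_lt _, ?_⟩
    refine aux_eq_of_gen S K hKS (pow_pos hp.pos s) hidx a ?_ ?_
    · exact Subgroup.subset_closure (Set.mem_insert_iff.mpr (Or.inr rfl))
    · intro x
      refine ⟨((Multiplicative.toAdd x).1.val : ℤ) - ν * (Multiplicative.toAdd x).2.val, ?_⟩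
      have hxeq : x * (a ^ (((Multiplicative.toAdd x).1.val : ℤ) -
          ν * (Multiplicative.toAdd x).2.val))⁻¹ =
          (a ^ ν * b) ^ (Multiplicative.toAdd x).2.val := by
        subst ha hb
        apply Multiplicative.toAdd.injective
        simp only [toAdd_mul, toAdd_pow, toAdd_inv, toAdd_zpow, toAdd_ofAdd, Prod.smul_mk,
          smul_zero, Prod.mk_add_mk, add_zero, zero_add, nsmul_eq_mul, zsmul_eq_mul, mul_one,
          Prod.neg_mk, neg_zero]
        ext
        · simp only [Prod.fst_add, Prod.snd_add]
          push_cast [ZMod.natCast_val, ZMod.cast_id]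
          ring
        · simp only [Prod.fst_add, Prod.snd_add]
          push_cast [ZMod.natCast_val, ZMod.cast_id]
          ring
      rw [hxeq]
      exact Subgroup.pow_mem _ (Subgroup.subset_closure (Set.mem_insert _ _)) _
  · -- second case : μ with A + μ B = 0 and p ∣ μ
    set v := hBu.unit with hv
    set μ : ℕ := ((↑v⁻¹ * (-A) : ZMod (p ^ s))).val with hμ
    have hμcast : ((μ : ℕ) : ZMod (p ^ s)) = ↑v⁻¹ * (-A) := by
      rw [hμ, ZMod.natCast_val, ZMod.cast_id]
    have hcomb : A + ((μ : ℕ) : ZMod (p ^ s)) * B = 0 := by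
      rw [hμcast, ← hBu.unit_spec]
      have : (↑v⁻¹ * -A) * ↑v = -A := by
        rw [mul_comm, ← mul_assoc, Units.mul_inv, one_mul]
      rw [this]; ring
    have hpμ : p ∣ μ := by
      obtain ⟨cA, hcA⟩ := hnonunit A hAu
      refine hpdvd _ ⟨↑v⁻¹ * -cA, ?_⟩
      rw [hcA]; ring
    have hS1 : a * b ^ μ ∈ S := by
      rw [hker]
      have : Multiplicative.toAdd (φ (a * b ^ μ)) = 0 := by
        simpa [map_mul, map_pow, toAdd_mul, toAdd_pow, nsmul_eq_mul] using hcomb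
      apply Multiplicative.toAdd.injective
      simpa using this
    set K := Subgroup.closure {a * b ^ μ, b ^ (p ^ s)} with hK
    have hKS : K ≤ S := by
      rw [hK, Subgroup.closure_le]
      rintro x (rfl | rfl)
      exacts [hS1, hSb]
    refine Or.inr ⟨μ, ZMod.val_lt _, hpμ, ?_⟩
    refine aux_eq_of_gen S K hKS (pow_pos hp.pos s) hidx b ?_ ?_
    · exact Subgroup.subset_closure (Set.mem_insert_iff.mpr (Or.inr rfl))
    · intro x
      refine ⟨((Multiplicative.toAdd x).2.val : ℤ) - μ * (Multiplicative.toAdd x).1.val, ?_⟩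
      have hxeq : x * (b ^ (((Multiplicative.toAdd x).2.val : ℤ) -
          μ * (Multiplicative.toAdd x).1.val))⁻¹ =
          (a * b ^ μ) ^ (Multiplicative.toAdd x).1.val := by
        subst ha hb
        apply Multiplicative.toAdd.injective
        simp only [toAdd_mul, toAdd_pow, toAdd_inv, toAdd_zpow, toAdd_ofAdd, Prod.smul_mk,
          smul_zero, Prod.mk_add_mk, add_zero, zero_add, nsmul_eq_mul, zsmul_eq_mul, mul_one,
          Prod.neg_mk, neg_zero]
        ext
        · simp only [Prod.fst_add, Prod.snd_add]
          push_cast [ZMod.natCast_val, ZMod.cast_id]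
          ring
        · simp only [Prod.fst_add, Prod.snd_add]
          push_cast [ZMod.natCast_val, ZMod.cast_id]
          ring
      rw [hxeq]
      exact Subgroup.pow_mem _ (Subgroup.subset_closure (Set.mem_insert _ _)) _
end

section
/- Let p be an odd prime, n ≥ 3, and M_n(p) as above. If h = a^k b^l with gcd(p, k) = 1 and gcd(p, l) = 1, then h^p = a^{kp}. In particular, ⟨h⟩ contains ⟨a^p⟩ and ⟨h⟩ has index p in M_n(p). -/
/-- Relations for the modular maximal-cyclic group
`M_n(p) = ⟨a, b ∣ a^(p^(n-1)) = 1, b^p = 1, b⁻¹ a b = a^(p^(n-2)+1)⟩`. -/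
def Mrels (p n : ℕ) : Set (FreeGroup (Fin 2)) :=
  {FreeGroup.of 0 ^ p ^ (n - 1), FreeGroup.of 1 ^ p,
    (FreeGroup.of 1)⁻¹ * FreeGroup.of 0 * FreeGroup.of 1 *
      (FreeGroup.of 0 ^ (p ^ (n - 2) + 1))⁻¹}

/-- The modular maximal-cyclic group `M_n(p)`, as a presented group. -/
abbrev Mgrp (p n : ℕ) := PresentedGroup (Mrels p n)

/-- The generator `a` of `M_n(p)`. -/
def Ma (p n : ℕ) : Mgrp p n := PresentedGroup.of 0

/-- The generator `b` of `M_n(p)`. -/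
def Mb (p n : ℕ) : Mgrp p n := PresentedGroup.of 1

lemma Mrel_one {p n : ℕ} {r : FreeGroup (Fin 2)} (hr : r ∈ Mrels p n) :
    PresentedGroup.mk (Mrels p n) r = 1 :=
  (QuotientGroup.eq_one_iff _).mpr (Subgroup.subset_normalClosure hr)

lemma Mrel_a (p n : ℕ) : Ma p n ^ p ^ (n - 1) = 1 := by
  have := Mrel_one (p := p) (n := n) (Set.mem_insert _ _)
  rwa [map_pow] at this

lemma Mrel_b (p n : ℕ) : Mb p n ^ p = 1 := by
  have := Mrel_one (p := p) (n := n)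
    (Set.mem_insert_of_mem _ (Set.mem_insert _ _))
  rwa [map_pow] at this

lemma Mrel_conj (p n : ℕ) :
    (Mb p n)⁻¹ * Ma p n * Mb p n = Ma p n ^ (p ^ (n - 2) + 1) := by
  have := Mrel_one (p := p) (n := n)
    (Set.mem_insert_of_mem _ (Set.mem_insert_of_mem _ rfl))
  rw [map_mul, map_mul, map_mul, map_inv, map_inv, map_pow, mul_inv_eq_one] at this
  exact this

/-- basic conjugation: `a^m * b^j = b^j * a^(m * r^j)` with `r = p^(n-2)+1`. -/
lemma Mconj (p n : ℕ) : ∀ j m : ℕ,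
    Ma p n ^ m * Mb p n ^ j = Mb p n ^ j * Ma p n ^ (m * (p ^ (n - 2) + 1) ^ j) := by
  intro j
  induction j with
  | zero => intro m; simp
  | succ j ih =>
    intro m
    have key : ∀ M : ℕ, Ma p n ^ M * Mb p n = Mb p n * Ma p n ^ (M * (p ^ (n - 2) + 1)) := by
      intro M
      have h1 : (Mb p n)⁻¹ * Ma p n ^ M * Mb p n = Ma p n ^ ((p ^ (n - 2) + 1) * M) := by
        have : ((Mb p n)⁻¹ * Ma p n * ((Mb p n)⁻¹)⁻¹) ^ M
            = (Mb p n)⁻¹ * Ma p n ^ M * ((Mb p n)⁻¹)⁻¹ := conj_pow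
        rw [inv_inv] at this
        rw [← this, Mrel_conj, ← pow_mul]
      have := congrArg (fun x => Mb p n * x) h1
      simpa [mul_assoc, mul_comm M] using this
    rw [pow_succ (Mb p n), ← mul_assoc, ih m, mul_assoc, key, ← mul_assoc,
      pow_succ (p ^ (n - 2) + 1), ← mul_assoc]

/-- left conjugation: `b^j * a^m = a^(m * r^(j*(p-1))) * b^j`. -/
lemma Mconj' (p n : ℕ) (hp : 0 < p) (j m : ℕ) :
    Mb p n ^ j * Ma p n ^ m = Ma p n ^ (m * (p ^ (n - 2) + 1) ^ (j * (p - 1))) * Mb p n ^ j := by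
  have hjp : j * (p - 1) + j = j * p := by
    rw [← Nat.mul_succ]; congr 1; omega
  have hone : Mb p n ^ (j * p) = 1 := by rw [pow_mul', Mrel_b, one_pow]
  have h2 : Mb p n ^ (j * (p - 1)) * Mb p n ^ j = 1 := by
    rw [← pow_add, hjp]; exact hone
  have h3 : Mb p n ^ j * Mb p n ^ (j * (p - 1)) = 1 := by
    rw [← pow_add, add_comm, hjp]; exact hone
  have h1 := Mconj p n (j * (p - 1)) m
  calc Mb p n ^ j * Ma p n ^ m
      = Mb p n ^ j * (Ma p n ^ m * Mb p n ^ (j * (p - 1)) * Mb p n ^ j) := by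
        rw [mul_assoc (Ma p n ^ m), h2, mul_one]
    _ = Mb p n ^ j * (Mb p n ^ (j * (p - 1)) *
          Ma p n ^ (m * (p ^ (n - 2) + 1) ^ (j * (p - 1))) * Mb p n ^ j) := by rw [h1]
    _ = (Mb p n ^ j * Mb p n ^ (j * (p - 1))) *
          (Ma p n ^ (m * (p ^ (n - 2) + 1) ^ (j * (p - 1))) * Mb p n ^ j) := by group
    _ = Ma p n ^ (m * (p ^ (n - 2) + 1) ^ (j * (p - 1))) * Mb p n ^ j := by
        rw [h3, one_mul]

lemma Msum (R k l t : ℕ) :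
    (k * ∑ i ∈ Finset.range t, R ^ (l * (i + 1)) + k) * R ^ l
      = k * ∑ i ∈ Finset.range (t + 1), R ^ (l * (i + 1)) := by
  rw [Finset.sum_range_succ', Nat.add_mul, mul_assoc, Finset.sum_mul, Nat.mul_add,
    Finset.mul_sum, Finset.mul_sum]
  congr 1
  · apply Finset.sum_congr rfl
    intro i _
    rw [← pow_add]
    ring
  · ring

lemma Mpow (p n k l : ℕ) : ∀ t : ℕ, (Ma p n ^ k * Mb p n ^ l) ^ t =
    Mb p n ^ (l * t) *
      Ma p n ^ (k * ∑ i ∈ Finset.range t, (p ^ (n - 2) + 1) ^ (l * (i + 1))) := by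
  intro t
  induction t with
  | zero => simp
  | succ t ih =>
    rw [pow_succ, ih, mul_assoc, ← mul_assoc (Ma p n ^ _), ← pow_add,
      Mconj p n l, ← mul_assoc, ← pow_add, Msum]
    ring_nf

lemma MsumNT (p n k l : ℕ) (hp : p.Prime) (hodd : Odd p) (hn : 3 ≤ n) :
    k * ∑ i ∈ Finset.range p, (p ^ (n - 2) + 1) ^ (l * (i + 1)) ≡ k * p [MOD p ^ (n - 1)] := by
  set N := p ^ (n - 1) with hN
  set Q : ZMod N := ((p ^ (n - 2) : ℕ) : ZMod N) with hQ
  have hQ2 : Q * Q = 0 := by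
    rw [hQ, ← Nat.cast_mul, ← pow_add, ZMod.natCast_eq_zero_iff]
    exact pow_dvd_pow p (by omega)
  have hQp : (p : ZMod N) * Q = 0 := by
    rw [hQ, ← Nat.cast_mul, ← pow_succ', ZMod.natCast_eq_zero_iff]
    exact pow_dvd_pow p (by omega)
  have hR : ∀ m : ℕ, ((p ^ (n - 2) + 1 : ℕ) : ZMod N) ^ m = 1 + (m : ZMod N) * Q := by
    intro m
    induction m with
    | zero => simp
    | succ m ih =>
      rw [pow_succ, ih, Nat.cast_add, Nat.cast_one, Nat.cast_add, Nat.cast_one, ← hQ]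
      linear_combination (m : ZMod N) * hQ2
  have h2unit : IsUnit (2 : ZMod N) := by
    have : ¬ (2 ∣ p) := by have := Nat.odd_iff.mp hodd; omega
    have hcop : Nat.Coprime 2 N := Nat.Coprime.pow_right _
      ((Nat.Prime.coprime_iff_not_dvd Nat.prime_two).mpr this)
    haveI : NeZero N := ⟨pow_ne_zero _ hp.pos.ne'⟩
    exact (ZMod.isUnit_iff_coprime 2 N).mpr hcop
  have hTQ : ((∑ i ∈ Finset.range p, l * (i + 1) : ℕ) : ZMod N) * Q = 0 := by
    have gauss : (∑ i ∈ Finset.range (p + 1), i) * 2 = (p + 1) * p := by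
      rw [Finset.sum_range_id_mul_two, Nat.add_sub_cancel]
    have hsum : ∑ i ∈ Finset.range p, (i + 1) = ∑ i ∈ Finset.range (p + 1), i := by
      rw [Finset.sum_range_succ']; omega
    have hnat : 2 * (∑ i ∈ Finset.range p, l * (i + 1)) = l * ((p + 1) * p) := by
      rw [← Finset.mul_sum, hsum, ← gauss]; ring
    have h0 : (2 : ZMod N) * (((∑ i ∈ Finset.range p, l * (i + 1) : ℕ) : ZMod N) * Q) = 0 := by
      rw [← mul_assoc, ← Nat.cast_ofNat, ← Nat.cast_mul, hnat]
      push_cast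
      linear_combination (l : ZMod N) * ((p : ZMod N) + 1) * hQp
    exact (h2unit.mul_right_eq_zero).mp h0
  have hS : ((∑ i ∈ Finset.range p, (p ^ (n - 2) + 1) ^ (l * (i + 1)) : ℕ) : ZMod N)
      = (p : ZMod N) := by
    rw [Nat.cast_sum]
    rw [Finset.sum_congr rfl (fun i _ => by rw [Nat.cast_pow, hR (l * (i + 1))])]
    rw [Finset.sum_add_distrib, Finset.sum_const, Finset.card_range, ← Finset.sum_mul]
    rw [Nat.cast_sum] at hTQ
    rw [hTQ]
    simp
  rw [← ZMod.natCast_eq_natCast_iff, Nat.cast_mul, Nat.cast_mul, hS]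

lemma Ma_pow_congr (p n : ℕ) {s t : ℕ} (h : s ≡ t [MOD p ^ (n - 1)]) :
    Ma p n ^ s = Ma p n ^ t :=
  pow_eq_pow_iff_modEq.mpr (h.of_dvd (orderOf_dvd_of_pow_eq_one (Mrel_a p n)))

lemma Mh_pow_p (p n k l : ℕ) (hp : p.Prime) (hodd : Odd p) (hn : 3 ≤ n) :
    (Ma p n ^ k * Mb p n ^ l) ^ p = Ma p n ^ (k * p) := by
  rw [Mpow]
  have hb : Mb p n ^ (l * p) = 1 := by rw [mul_comm, pow_mul, Mrel_b, one_pow]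
  rw [hb, one_mul]
  exact Ma_pow_congr p n (MsumNT p n k l hp hodd hn)

lemma Map_mem (p n k l : ℕ) (hp : p.Prime) (hodd : Odd p) (hn : 3 ≤ n)
    (hk : Nat.gcd p k = 1) :
    Ma p n ^ p ∈ Subgroup.zpowers (Ma p n ^ k * Mb p n ^ l) := by
  have h1lt : 1 < p ^ (n - 2) := Nat.one_lt_pow (by omega) hp.one_lt
  have hcop : Nat.Coprime k (p ^ (n - 2)) :=
    Nat.Coprime.pow_right _ (Nat.coprime_comm.mp hk)
  obtain ⟨c, -, hc⟩ := Nat.exists_mul_mod_eq_one_of_coprime hcop h1lt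
  have hmod : k * c ≡ 1 [MOD p ^ (n - 2)] := by
    show k * c % _ = 1 % _
    rw [hc, Nat.mod_eq_of_lt h1lt]
  have hNsplit : p * p ^ (n - 2) = p ^ (n - 1) := by
    rw [← pow_succ']; congr 1; omega
  have hmod2 : k * p * c ≡ p [MOD p ^ (n - 1)] := by
    have := Nat.ModEq.mul_left' (c := p) hmod
    rw [hNsplit, mul_one] at this
    calc k * p * c = p * (k * c) := by ring
      _ ≡ p [MOD p ^ (n - 1)] := this
  have key : Ma p n ^ p = ((Ma p n ^ k * Mb p n ^ l) ^ p) ^ c := by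
    rw [Mh_pow_p p n k l hp hodd hn, ← pow_mul]
    exact (Ma_pow_congr p n hmod2).symm
  rw [key, ← pow_mul]
  exact Subgroup.pow_mem _ (Subgroup.mem_zpowers _) _

lemma Mphi (p n k l : ℕ) (hp : p.Prime) (hn : 3 ≤ n) :
    ∃ φ : Mgrp p n →* Multiplicative (ZMod p),
      φ (Ma p n) = Multiplicative.ofAdd (l : ZMod p) ∧
      φ (Mb p n) = Multiplicative.ofAdd (-(k : ZMod p)) := by
  set f : Fin 2 → Multiplicative (ZMod p) :=
    ![Multiplicative.ofAdd (l : ZMod p), Multiplicative.ofAdd (-(k : ZMod p))] with hf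
  have hrels : ∀ r ∈ Mrels p n, FreeGroup.lift f r = 1 := by
    intro r hr
    have e0 : FreeGroup.lift f (FreeGroup.of 0) = Multiplicative.ofAdd (l : ZMod p) := by
      simp [hf]
    have e1 : FreeGroup.lift f (FreeGroup.of 1) = Multiplicative.ofAdd (-(k : ZMod p)) := by
      simp [hf]
    have hq : ((p ^ (n - 2) : ℕ) : ZMod p) = 0 := by
      rw [ZMod.natCast_eq_zero_iff]
      exact dvd_pow_self p (by omega)
    have hN : ((p ^ (n - 1) : ℕ) : ZMod p) = 0 := by
      rw [ZMod.natCast_eq_zero_iff]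
      exact dvd_pow_self p (by omega)
    rcases hr with rfl | rfl | rfl
    · rw [map_pow, e0, ← ofAdd_nsmul, nsmul_eq_mul, hN, zero_mul]; rfl
    · rw [map_pow, e1, ← ofAdd_nsmul, nsmul_eq_mul, ZMod.natCast_self, zero_mul]; rfl
    · rw [map_mul, map_mul, map_mul, map_inv, map_inv, map_pow, e0, e1,
        ← ofAdd_nsmul, nsmul_eq_mul]
      push_cast [hq]
      simp only [← ofAdd_neg, ← ofAdd_add, ← ofAdd_zero (α := ZMod p)]
      congr 1
      ring
  exact ⟨PresentedGroup.toGroup hrels, PresentedGroup.toGroup.of hrels,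
    PresentedGroup.toGroup.of hrels⟩

lemma Ma_not_mem (p n k l : ℕ) (hp : p.Prime) (hn : 3 ≤ n)
    (hl : Nat.gcd p l = 1) :
    Ma p n ∉ Subgroup.zpowers (Ma p n ^ k * Mb p n ^ l) := by
  obtain ⟨φ, ha, hb⟩ := Mphi p n k l hp hn
  intro hmem
  obtain ⟨z, hz⟩ := Subgroup.mem_zpowers_iff.mp hmem
  have hker : φ (Ma p n ^ k * Mb p n ^ l) = 1 := by
    rw [map_mul, map_pow, map_pow, ha, hb, ← ofAdd_nsmul, ← ofAdd_nsmul, ← ofAdd_add,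
      nsmul_eq_mul, nsmul_eq_mul]
    have : (k : ZMod p) * l + (l : ZMod p) * -(k : ZMod p) = 0 := by ring
    rw [this]; rfl
  have : φ (Ma p n) = 1 := by
    rw [← hz, map_zpow, hker, one_zpow]
  rw [ha] at this
  have hl0 : (l : ZMod p) = 0 := by
    have := congrArg Multiplicative.toAdd this
    simpa using this
  rw [ZMod.natCast_eq_zero_iff] at hl0
  exact (Nat.Prime.coprime_iff_not_dvd hp).mp hl hl0

lemma mem_normalizer_zpowers {G : Type*} [Group G] {h g : G}
    (h1 : g * h * g⁻¹ ∈ Subgroup.zpowers h) (h2 : g⁻¹ * h * g ∈ Subgroup.zpowers h) :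
    g ∈ Subgroup.normalizer (Subgroup.zpowers h : Set G) := by
  rw [Subgroup.mem_normalizer_iff]
  intro x
  constructor
  · intro hx
    obtain ⟨z, rfl⟩ := Subgroup.mem_zpowers_iff.mp hx
    have : g * h ^ z * g⁻¹ = (g * h * g⁻¹) ^ z := conj_zpow.symm
    rw [this]
    exact Subgroup.zpow_mem _ h1 z
  · intro hx
    obtain ⟨z, hz⟩ := Subgroup.mem_zpowers_iff.mp hx
    have hx' : x = (g⁻¹ * h * g) ^ z := by
      rw [show (g⁻¹ * h * g) ^ z = g⁻¹ * h ^ z * g by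
        rw [show g⁻¹ * h * g = g⁻¹ * h * g⁻¹⁻¹ by rw [inv_inv], conj_zpow, inv_inv]]
      rw [hz]
      group
    rw [hx']
    exact Subgroup.zpow_mem _ h2 z

lemma Mdvd_sub_one (p n : ℕ) (hn : 3 ≤ n) (e : ℕ) :
    p ∣ (p ^ (n - 2) + 1) ^ e - 1 := by
  obtain ⟨c, hc⟩ : p ∣ p ^ (n - 2) := dvd_pow_self p (by omega)
  have hbase : (1 : ℕ) ≡ p ^ (n - 2) + 1 [MOD p] := by
    show 1 % p = (p ^ (n - 2) + 1) % p
    rw [hc, Nat.mul_add_mod]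
  have h1 : 1 ≡ (p ^ (n - 2) + 1) ^ e [MOD p] := by
    calc (1 : ℕ) = 1 ^ e := (one_pow e).symm
      _ ≡ (p ^ (n - 2) + 1) ^ e [MOD p] := Nat.ModEq.pow e hbase
  exact (Nat.modEq_iff_dvd' (Nat.one_le_pow _ _ (by positivity))).mp h1

lemma Mh_normal (p n k l : ℕ) (hp : p.Prime) (hodd : Odd p) (hn : 3 ≤ n)
    (hk : Nat.gcd p k = 1) :
    (Subgroup.zpowers (Ma p n ^ k * Mb p n ^ l)).Normal := by
  have hppos : 0 < p := hp.pos
  set r : ℕ := p ^ (n - 2) + 1 with hr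
  set N : ℕ := p ^ (n - 1) with hN
  have hNpos : 0 < N := by positivity
  set A := Ma p n with hA
  set B := Mb p n with hB
  set h := A ^ k * B ^ l with hh
  set H := Subgroup.zpowers h with hH
  have hmemh : h ∈ H := Subgroup.mem_zpowers h
  have hap : A ^ p ∈ H := Map_mem p n k l hp hodd hn hk
  have hmul : ∀ m : ℕ, p ∣ m → A ^ m ∈ H := by
    intro m hm
    obtain ⟨c, rfl⟩ := hm
    rw [pow_mul]
    exact Subgroup.pow_mem _ hap c
  have hprod : ∀ m : ℕ, p ∣ m → A ^ m * h ∈ H := fun m hm =>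
    Subgroup.mul_mem _ (hmul m hm) hmemh
  have hb1 : B⁻¹ = B ^ (p - 1) := by
    apply inv_eq_of_mul_eq_one_right
    rw [← pow_succ']
    have he : p - 1 + 1 = p := by omega
    rw [he, Mrel_b]
  have ha1 : A⁻¹ = A ^ (N - 1) := by
    apply inv_eq_of_mul_eq_one_right
    rw [← pow_succ']
    have he : N - 1 + 1 = N := by omega
    rw [he, hN, Mrel_a]
  have hrpow : ∀ e : ℕ, r ^ e ≡ 1 [MOD p] := fun e =>
    ((Nat.modEq_iff_dvd' (Nat.one_le_pow _ _ (by positivity))).mpr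
      (Mdvd_sub_one p n hn e)).symm
  have hpN : p ∣ N := dvd_pow_self p (by omega)
  -- generic tail rewriting: A ^ (m + k) * B ^ l = A ^ m * h
  have tail : ∀ m : ℕ, A ^ (m + k) * B ^ l = A ^ m * h := by
    intro m
    rw [pow_add, mul_assoc, hh]
  -- (1) B * h * B⁻¹ ∈ H
  have hcb : B * h * B⁻¹ ∈ H := by
    have hconj := Mconj' p n hppos 1 k
    rw [← hr, ← hA, ← hB] at hconj
    have hle : k ≤ k * r ^ (1 * (p - 1)) :=
      Nat.le_mul_of_pos_right _ (by positivity)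
    have key : B * h * B⁻¹ = A ^ (k * r ^ (1 * (p - 1)) - k) * h := by
      rw [hb1, hh]
      calc B * (A ^ k * B ^ l) * B ^ (p - 1)
          = (B ^ 1 * A ^ k) * (B ^ l * B ^ (p - 1)) := by rw [pow_one]; group
        _ = (A ^ (k * r ^ (1 * (p - 1))) * B ^ 1) * (B ^ l * B ^ (p - 1)) := by rw [hconj]
        _ = A ^ (k * r ^ (1 * (p - 1))) * B ^ (1 + (l + (p - 1))) := by
            rw [pow_add, pow_add]; group
        _ = A ^ (k * r ^ (1 * (p - 1))) * B ^ (l + p) := by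
            have he : 1 + (l + (p - 1)) = l + p := by omega
            rw [he]
        _ = A ^ (k * r ^ (1 * (p - 1))) * B ^ l := by
            rw [pow_add, hB, Mrel_b, mul_one]
        _ = A ^ ((k * r ^ (1 * (p - 1)) - k) + k) * B ^ l := by
            have he : (k * r ^ (1 * (p - 1)) - k) + k = k * r ^ (1 * (p - 1)) := by omega
            rw [he]
        _ = A ^ (k * r ^ (1 * (p - 1)) - k) * (A ^ k * B ^ l) := by
            rw [pow_add, mul_assoc]
    rw [key]
    refine hprod _ ?_
    have : k * r ^ (1 * (p - 1)) - k = k * (r ^ (1 * (p - 1)) - 1) := by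
      rw [Nat.mul_sub k (r ^ (1 * (p - 1))) 1, mul_one]
    rw [this]
    exact Dvd.dvd.mul_left (Mdvd_sub_one p n hn _) k
  -- (2) B⁻¹ * h * B ∈ H
  have hcb' : B⁻¹ * h * B ∈ H := by
    have hconj := Mconj' p n hppos (p - 1) k
    rw [← hr, ← hA, ← hB] at hconj
    have key : B⁻¹ * h * B = A ^ (k * r ^ ((p - 1) * (p - 1)) - k) * h := by
      rw [hb1, hh]
      calc B ^ (p - 1) * (A ^ k * B ^ l) * B
          = (B ^ (p - 1) * A ^ k) * (B ^ l * B ^ 1) := by rw [pow_one]; group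
        _ = (A ^ (k * r ^ ((p - 1) * (p - 1))) * B ^ (p - 1)) * (B ^ l * B ^ 1) := by
            rw [hconj]
        _ = A ^ (k * r ^ ((p - 1) * (p - 1))) * B ^ ((p - 1) + (l + 1)) := by
            rw [pow_add, pow_add]; group
        _ = A ^ (k * r ^ ((p - 1) * (p - 1))) * B ^ (l + p) := by
            have he : (p - 1) + (l + 1) = l + p := by omega
            rw [he]
        _ = A ^ (k * r ^ ((p - 1) * (p - 1))) * B ^ l := by
            rw [pow_add, hB, Mrel_b, mul_one]
        _ = A ^ ((k * r ^ ((p - 1) * (p - 1)) - k) + k) * B ^ l := by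
            have hle : k ≤ k * r ^ ((p - 1) * (p - 1)) :=
              Nat.le_mul_of_pos_right _ (by positivity)
            have he : (k * r ^ ((p - 1) * (p - 1)) - k) + k
                = k * r ^ ((p - 1) * (p - 1)) := by omega
            rw [he]
        _ = A ^ (k * r ^ ((p - 1) * (p - 1)) - k) * (A ^ k * B ^ l) := by
            rw [pow_add, mul_assoc]
    rw [key]
    refine hprod _ ?_
    have : k * r ^ ((p - 1) * (p - 1)) - k = k * (r ^ ((p - 1) * (p - 1)) - 1) := by
      rw [Nat.mul_sub k (r ^ ((p - 1) * (p - 1))) 1, mul_one]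
    rw [this]
    exact Dvd.dvd.mul_left (Mdvd_sub_one p n hn _) k
  -- (3) A * h * A⁻¹ ∈ H
  have hca : A * h * A⁻¹ ∈ H := by
    have hconj := Mconj' p n hppos l (N - 1)
    rw [← hr, ← hA, ← hB] at hconj
    have key : A * h * A⁻¹ = A ^ (1 + (N - 1) * r ^ (l * (p - 1))) * h := by
      rw [ha1, hh]
      calc A * (A ^ k * B ^ l) * A ^ (N - 1)
          = A ^ (1 + k) * (B ^ l * A ^ (N - 1)) := by rw [pow_add, pow_one]; group
        _ = A ^ (1 + k) * (A ^ ((N - 1) * r ^ (l * (p - 1))) * B ^ l) := by rw [hconj]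
        _ = A ^ ((1 + (N - 1) * r ^ (l * (p - 1))) + k) * B ^ l := by
            rw [pow_add, pow_add, pow_add]; group
        _ = A ^ (1 + (N - 1) * r ^ (l * (p - 1))) * (A ^ k * B ^ l) := by
            rw [pow_add, mul_assoc]
    rw [key]
    refine hprod _ ?_
    have h2 : 1 + (N - 1) * r ^ (l * (p - 1)) ≡ 1 + (N - 1) * 1 [MOD p] :=
      Nat.ModEq.add_left 1 (Nat.ModEq.mul_left _ (hrpow _))
    have h3 : 1 + (N - 1) * 1 = N := by omega
    have h4 : 1 + (N - 1) * r ^ (l * (p - 1)) ≡ 0 [MOD p] := by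
      rw [h3] at h2
      exact h2.trans ((Nat.modEq_zero_iff_dvd).mpr hpN)
    exact (Nat.modEq_zero_iff_dvd).mp h4
  -- (4) A⁻¹ * h * A ∈ H
  have hca' : A⁻¹ * h * A ∈ H := by
    have hconj := Mconj' p n hppos l 1
    rw [← hr, ← hA, ← hB] at hconj
    have key : A⁻¹ * h * A = A ^ ((N - 1) + 1 * r ^ (l * (p - 1))) * h := by
      rw [ha1, hh]
      calc A ^ (N - 1) * (A ^ k * B ^ l) * A
          = A ^ ((N - 1) + k) * (B ^ l * A ^ 1) := by rw [pow_add, pow_one]; group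
        _ = A ^ ((N - 1) + k) * (A ^ (1 * r ^ (l * (p - 1))) * B ^ l) := by rw [hconj]
        _ = A ^ (((N - 1) + 1 * r ^ (l * (p - 1))) + k) * B ^ l := by
            rw [pow_add, pow_add, pow_add]; group
        _ = A ^ ((N - 1) + 1 * r ^ (l * (p - 1))) * (A ^ k * B ^ l) := by
            rw [pow_add, mul_assoc]
    rw [key]
    refine hprod _ ?_
    have h2 : (N - 1) + 1 * r ^ (l * (p - 1)) ≡ (N - 1) + 1 * 1 [MOD p] :=
      Nat.ModEq.add_left _ (Nat.ModEq.mul_left _ (hrpow _))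
    have h3 : (N - 1) + 1 * 1 = N := by omega
    have h4 : (N - 1) + 1 * r ^ (l * (p - 1)) ≡ 0 [MOD p] := by
      rw [h3] at h2
      exact h2.trans ((Nat.modEq_zero_iff_dvd).mpr hpN)
    exact (Nat.modEq_zero_iff_dvd).mp h4
  -- conclude
  rw [← Subgroup.normalizer_eq_top_iff]
  rw [eq_top_iff, ← PresentedGroup.closure_range_of (Mrels p n)]
  rw [Subgroup.closure_le]
  rintro x ⟨i, rfl⟩
  fin_cases i
  · exact mem_normalizer_zpowers hca hca'
  · exact mem_normalizer_zpowers hcb hcb'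

lemma Mindex (p n k l : ℕ) (hp : p.Prime) (hodd : Odd p) (hn : 3 ≤ n)
    (hk : Nat.gcd p k = 1) (hl : Nat.gcd p l = 1) :
    (Subgroup.zpowers (Ma p n ^ k * Mb p n ^ l)).index = p := by
  set h := Ma p n ^ k * Mb p n ^ l with hh
  set H := Subgroup.zpowers h with hH
  haveI : H.Normal := Mh_normal p n k l hp hodd hn hk
  set π := QuotientGroup.mk' H with hπ
  set abar := π (Ma p n) with habar
  have hap1 : abar ^ p = 1 := by
    rw [habar, ← map_pow, hπ, QuotientGroup.coe_mk', QuotientGroup.eq_one_iff]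
    exact Map_mem p n k l hp hodd hn hk
  have hord_dvd : orderOf abar ∣ p := orderOf_dvd_of_pow_eq_one hap1
  have habar_ne : abar ≠ 1 := by
    intro h1
    have : Ma p n ∈ H := (QuotientGroup.eq_one_iff _).mp (by rwa [habar, hπ, QuotientGroup.coe_mk'] at h1)
    exact Ma_not_mem p n k l hp hn hl this
  have hord : orderOf abar = p := by
    rcases Nat.Prime.eq_one_or_self_of_dvd hp _ hord_dvd with h1 | h1
    · exact absurd (orderOf_eq_one_iff.mp h1) habar_ne
    · exact h1
  have hπh : π h = 1 := by
    rw [hπ, QuotientGroup.coe_mk', QuotientGroup.eq_one_iff]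
    exact Subgroup.mem_zpowers h
  have hbbar : π (Mb p n) ∈ Subgroup.zpowers abar := by
    obtain ⟨c, -, hc⟩ := Nat.exists_mul_mod_eq_one_of_coprime
      (Nat.coprime_comm.mp hl) hp.one_lt
    have hmod : l * c ≡ 1 [MOD p] := by
      show l * c % p = 1 % p
      rw [hc, Nat.mod_eq_of_lt hp.one_lt]
    have hb : Mb p n ^ (l * c) = Mb p n := by
      have := pow_eq_pow_iff_modEq.mpr
        (hmod.of_dvd (orderOf_dvd_of_pow_eq_one (Mrel_b p n)))
      rwa [pow_one] at this
    have hbl : π (Mb p n ^ l) = (abar ^ k)⁻¹ := by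
      have he : Mb p n ^ l = (Ma p n ^ k)⁻¹ * h := by rw [hh]; group
      rw [he, map_mul, map_inv, map_pow, hπh, mul_one, habar]
    have heq : π (Mb p n) = ((abar ^ k)⁻¹) ^ c := by
      rw [← hb, ← hbl, ← map_pow, pow_mul]
    rw [heq]
    exact Subgroup.pow_mem _ (Subgroup.inv_mem _ (Subgroup.pow_mem _
      (Subgroup.mem_zpowers abar) k)) c
  have hS : ∀ g : Mgrp p n, π g ∈ Subgroup.zpowers abar := by
    intro g
    refine PresentedGroup.generated_by (Mrels p n)
      (Subgroup.comap π (Subgroup.zpowers abar)) ?_ g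
    intro j
    fin_cases j
    · exact Subgroup.mem_comap.mpr (Subgroup.mem_zpowers abar)
    · exact Subgroup.mem_comap.mpr hbbar
  have htop : Subgroup.zpowers abar = ⊤ := by
    rw [eq_top_iff]
    intro x _
    obtain ⟨g, rfl⟩ := QuotientGroup.mk'_surjective H x
    exact hS g
  calc H.index = Nat.card (Mgrp p n ⧸ H) := rfl
    _ = Nat.card (⊤ : Subgroup (Mgrp p n ⧸ H)) := Subgroup.card_top.symm
    _ = Nat.card (Subgroup.zpowers abar) := by rw [htop]
    _ = orderOf abar := Nat.card_zpowers abar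
    _ = p := hord

theorem Mgrp_pow_p_of_generator (p n : ℕ) (hp : p.Prime) (hodd : Odd p) (hn : 3 ≤ n)
    (k l : ℕ) (hk : Nat.gcd p k = 1) (hl : Nat.gcd p l = 1)
    (h : Mgrp p n) (hh : h = Ma p n ^ k * Mb p n ^ l) :
    h ^ p = Ma p n ^ (k * p) ∧
      Subgroup.zpowers (Ma p n ^ p) ≤ Subgroup.zpowers h ∧
      (Subgroup.zpowers h).index = p := by
  subst hh
  exact ⟨Mh_pow_p p n k l hp hodd hn,
    Subgroup.zpowers_le.mpr (Map_mem p n k l hp hodd hn hk),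
    Mindex p n k l hp hodd hn hk hl⟩
end

section
/- Let p be an odd prime, n ≥ 3, and M_n(p) as above. If h ∈ M_n(p) does not lie in the subgroup ⟨a^p, b⟩, then the centralizer of h in M_n(p) is the cyclic group ⟨h⟩, which has index p. -/
set_option linter.unusedSectionVars false
set_option linter.unusedVariables false


section Model

variable (p n : ℕ)

/-- Concrete model of the modular maximal-cyclic group. -/
@[ext]
structure Mdl where
  x : ZMod (p ^ (n - 1))
  y : ZMod p

namespace Mdl

/-- The element `p^(n-2)` of `ZMod (p^(n-1))`. -/
def mm : ZMod (p ^ (n - 1)) := (p ^ (n - 2) : ℕ)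

/-- The unit `1 - p^(n-2)`. -/
def uu : ZMod (p ^ (n - 1)) := 1 - mm p n

variable [hp : Fact p.Prime] [hn : Fact (3 ≤ n)]


instance : NeZero (p ^ (n - 1)) := ⟨pow_ne_zero _ hp.out.pos.ne'⟩

lemma mm_sq : mm p n * mm p n = 0 := by
  rw [mm, ← Nat.cast_mul, ZMod.natCast_eq_zero_iff, ← pow_add]
  exact pow_dvd_pow p (by have := hn.out; omega)

lemma p_mul_mm : (p : ZMod (p ^ (n - 1))) * mm p n = 0 := by
  rw [mm, ← Nat.cast_mul, ZMod.natCast_eq_zero_iff]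
  have h : p * p ^ (n - 2) = p ^ (n - 1) := by
    rw [← pow_succ']; congr 1; have := hn.out; omega
  rw [h]

lemma uu_mul : uu p n * (1 + mm p n) = 1 := by
  have h := mm_sq p n
  rw [uu]
  linear_combination -h

lemma uu_pow (k : ℕ) : uu p n ^ k = 1 - (k : ZMod (p ^ (n - 1))) * mm p n := by
  induction k with
  | zero => simp
  | succ k ih =>
    rw [pow_succ, ih, uu]
    have h := mm_sq p n
    push_cast
    linear_combination (k : ZMod (p ^ (n - 1))) * h

lemma uu_pow_p : uu p n ^ p = 1 := by
  rw [uu_pow, p_mul_mm, sub_zero]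

lemma uu_pow_mod (k : ℕ) : uu p n ^ (k % p) = uu p n ^ k := by
  conv_rhs => rw [← Nat.div_add_mod k p]
  rw [pow_add, pow_mul, uu_pow_p, one_pow, one_mul]

lemma uu_pow_val_add (y z : ZMod p) :
    uu p n ^ ((y + z).val) = uu p n ^ y.val * uu p n ^ z.val := by
  rw [ZMod.val_add, uu_pow_mod, pow_add]

end Mdl

end Model

namespace Mdl

variable (p n : ℕ) [hp : Fact p.Prime] [hn : Fact (3 ≤ n)]

instance : One (Mdl p n) := ⟨⟨0, 0⟩⟩
instance : Mul (Mdl p n) :=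
  ⟨fun g h => ⟨g.x + uu p n ^ g.y.val * h.x, g.y + h.y⟩⟩
instance : Inv (Mdl p n) :=
  ⟨fun g => ⟨-(uu p n ^ (-g.y).val * g.x), -g.y⟩⟩

variable {p n}

@[simp] lemma mul_x (g h : Mdl p n) : (g * h).x = g.x + uu p n ^ g.y.val * h.x := rfl
@[simp] lemma mul_y (g h : Mdl p n) : (g * h).y = g.y + h.y := rfl
@[simp] lemma one_x : (1 : Mdl p n).x = 0 := rfl
@[simp] lemma one_y : (1 : Mdl p n).y = 0 := rfl
@[simp] lemma inv_x (g : Mdl p n) : (g⁻¹).x = -(uu p n ^ (-g.y).val * g.x) := rfl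
@[simp] lemma inv_y (g : Mdl p n) : (g⁻¹).y = -g.y := rfl

instance : Group (Mdl p n) :=
  Group.ofLeftAxioms
    (fun a b c => by
      ext
      · simp [uu_pow_val_add]; ring
      · simp [add_assoc])
    (fun a => by ext <;> simp)
    (fun a => by ext <;> simp)

variable (p n)

/-- The generator `a` in the model. -/
def A : Mdl p n := ⟨1, 0⟩
/-- The generator `b` in the model. -/
def B : Mdl p n := ⟨0, 1⟩

variable {p n}

lemma pow_left (v : ZMod (p ^ (n - 1))) (k : ℕ) :
    (⟨v, 0⟩ : Mdl p n) ^ k = ⟨(k : ZMod (p ^ (n - 1))) * v, 0⟩ := by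
  induction k with
  | zero => ext <;> simp
  | succ k ih => rw [pow_succ, ih]; ext <;> push_cast <;> simp <;> ring

lemma A_pow (k : ℕ) : A p n ^ k = ⟨(k : ZMod (p ^ (n - 1))), 0⟩ := by
  rw [A, pow_left, mul_one]

lemma B_pow (k : ℕ) : B p n ^ k = ⟨0, (k : ZMod p)⟩ := by
  induction k with
  | zero => ext <;> simp
  | succ k ih => rw [pow_succ, ih]; ext <;> push_cast <;> simp [B]

end Mdl

namespace Mdl

variable {p n : ℕ} [hp : Fact p.Prime] [hn : Fact (3 ≤ n)]

lemma uu_pow_val_smul (k : ℕ) (y : ZMod p) :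
    uu p n ^ ((k • y).val) = uu p n ^ (k * y.val) := by
  have : (k • y) = ((k * y.val : ℕ) : ZMod p) := by
    push_cast [ZMod.natCast_zmod_val]; ring
  rw [this, ZMod.val_natCast, uu_pow_mod]

lemma pow_formula (g : Mdl p n) (k : ℕ) :
    g ^ k = ⟨(∑ t ∈ Finset.range k, uu p n ^ (t * g.y.val)) * g.x, k • g.y⟩ := by
  induction k with
  | zero => ext <;> simp
  | succ k ih =>
    rw [pow_succ, ih]
    ext
    · simp only [mul_x, Finset.sum_range_succ, uu_pow_val_smul]
      ring
    · rw [mul_y, succ_nsmul]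

lemma sum_uu (hodd : Odd p) (j : ℕ) :
    (∑ t ∈ Finset.range p, uu p n ^ (t * j)) = (p : ZMod (p ^ (n - 1))) := by
  have key : ∀ t, uu p n ^ (t * j) = 1 - (t * j : ℕ) * mm p n := fun t => uu_pow _ _ _
  rw [Finset.sum_congr rfl fun t _ => key t]
  rw [Finset.sum_sub_distrib]
  simp only [Finset.sum_const, Finset.card_range, nsmul_eq_mul, mul_one]
  have hsum : (∑ t ∈ Finset.range p, ((t * j : ℕ) : ZMod (p ^ (n - 1))) * mm p n) = 0 := by
    have : (∑ t ∈ Finset.range p, ((t * j : ℕ) : ZMod (p ^ (n - 1))) * mm p n)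
        = ((∑ t ∈ Finset.range p, t) * j : ℕ) * mm p n := by
      push_cast
      rw [Finset.sum_mul, Finset.sum_mul]
    rw [this]
    obtain ⟨c, hc⟩ : ∃ c, ∑ t ∈ Finset.range p, t = p * c := by
      rcases hodd with ⟨m, hm⟩
      have h2 := Finset.sum_range_id_mul_two p
      have h3 : p - 1 = 2 * m := by omega
      rw [h3] at h2
      refine ⟨m, Nat.eq_of_mul_eq_mul_right two_pos ?_⟩
      rw [h2]; ring
    rw [hc]
    push_cast
    linear_combination ((c : ZMod (p ^ (n - 1))) * j) * p_mul_mm p n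
  rw [hsum, sub_zero]

lemma pow_p (hodd : Odd p) (g : Mdl p n) :
    g ^ p = ⟨(p : ZMod (p ^ (n - 1))) * g.x, 0⟩ := by
  rw [pow_formula, sum_uu hodd]
  congr 1
  simp [nsmul_eq_mul, ZMod.natCast_self]

end Mdl

namespace Mdl

variable {p n : ℕ} [hp : Fact p.Prime] [hn : Fact (3 ≤ n)]

/-- The obvious equivalence with a product. -/
def prodEquiv : Mdl p n ≃ ZMod (p ^ (n - 1)) × ZMod p where
  toFun g := (g.x, g.y)
  invFun z := ⟨z.1, z.2⟩
  left_inv g := rfl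
  right_inv z := rfl

instance : Finite (Mdl p n) := Finite.of_equiv _ (prodEquiv (p := p) (n := n)).symm

lemma card_mdl : Nat.card (Mdl p n) = p ^ n := by
  rw [Nat.card_congr (prodEquiv (p := p) (n := n)), Nat.card_prod, Nat.card_zmod,
    Nat.card_zmod, ← pow_succ]
  congr 1
  have := hn.out
  omega

/-- Reduction mod `p`. -/
def cp : ZMod (p ^ (n - 1)) →+* ZMod p :=
  ZMod.castHom (dvd_pow_self p (by have := hn.out; omega : n - 1 ≠ 0)) (ZMod p)

lemma cp_natCast (k : ℕ) : cp (k : ZMod (p ^ (n - 1))) = (k : ZMod p) := map_natCast _ _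

lemma cp_mm : cp (mm p n) = 0 := by
  rw [mm, cp_natCast, ZMod.natCast_eq_zero_iff]
  exact dvd_pow_self p (by have := hn.out; omega)

lemma cp_uu_pow (k : ℕ) : cp (uu p n ^ k) = 1 := by
  rw [map_pow, uu, map_sub, map_one, cp_mm, sub_zero, one_pow]

lemma cp_val (x : ZMod (p ^ (n - 1))) : cp x = (x.val : ZMod p) := by
  conv_lhs => rw [← ZMod.natCast_zmod_val x]
  rw [cp_natCast]

lemma mm_mul_eq_zero_iff (t : ZMod (p ^ (n - 1))) : mm p n * t = 0 ↔ cp t = 0 := by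
  have h3 := hn.out
  conv_lhs => rw [← ZMod.natCast_zmod_val t]
  rw [mm, ← Nat.cast_mul, ZMod.natCast_eq_zero_iff, cp_val,
    ZMod.natCast_eq_zero_iff]
  have h1 : p ^ (n - 1) = p ^ (n - 2) * p := by rw [← pow_succ]; congr 1; omega
  constructor
  · intro hdvd
    have hdvd2 : p ^ (n - 2) * p ∣ p ^ (n - 2) * t.val := by rw [← h1]; exact hdvd
    exact (mul_dvd_mul_iff_left (pow_ne_zero (n - 2) hp.out.pos.ne')).mp hdvd2
  · rintro ⟨c, hc⟩
    exact ⟨c, by rw [hc, h1]; ring⟩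

lemma isUnit_of_cp_ne (x : ZMod (p ^ (n - 1))) (hx : cp x ≠ 0) : IsUnit x := by
  have h3 := hn.out
  rw [cp_val] at hx
  simp only [Ne, ZMod.natCast_eq_zero_iff] at hx
  rw [← ZMod.natCast_zmod_val x, ZMod.isUnit_iff_coprime]
  exact Nat.Coprime.pow_right _ ((Nat.Prime.coprime_iff_not_dvd hp.out).mpr hx).symm

lemma orderOf_unit (hodd : Odd p) (g : Mdl p n) (hg : IsUnit g.x) :
    orderOf g = p ^ (n - 1) := by
  have h3 := hn.out
  have key : ∀ k : ℕ, g ^ (p * k) = ⟨((p * k : ℕ) : ZMod (p ^ (n - 1))) * g.x, 0⟩ := by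
    intro k
    rw [pow_mul, pow_p hodd, pow_left]
    ext
    · push_cast; ring
    · simp
  have hfin : g ^ (p ^ ((n - 2) + 1)) = 1 := by
    have e1 : p ^ ((n - 2) + 1) = p * p ^ (n - 2) := by rw [pow_succ]; ring
    have e2 : p * p ^ (n - 2) = p ^ (n - 1) := by rw [← pow_succ']; congr 1; omega
    rw [e1, key, e2, ZMod.natCast_self]
    ext
    · simp
    · rfl
  have hnot : ¬ g ^ (p ^ (n - 2)) = 1 := by
    have e2 : p ^ (n - 2) = p * p ^ (n - 3) := by rw [← pow_succ']; congr 1; omega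
    intro hcon
    rw [e2, key] at hcon
    have hx0 : ((p * p ^ (n - 3) : ℕ) : ZMod (p ^ (n - 1))) * g.x = 0 := congrArg Mdl.x hcon
    rw [← e2] at hx0
    have hmm : mm p n * g.x = 0 := hx0
    have hz : mm p n = 0 := (hg.mul_left_eq_zero).mp hmm
    rw [mm, ZMod.natCast_eq_zero_iff] at hz
    have := (Nat.pow_dvd_pow_iff_le_right hp.out.one_lt).mp hz
    omega
  have := orderOf_eq_prime_pow hnot hfin
  rw [this]
  congr 1
  omega

end Mdl

section Homs

variable (p n : ℕ) [hp : Fact p.Prime] [hn : Fact (3 ≤ n)]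

open Mdl

lemma rel_one {r : FreeGroup (Fin 2)} (hr : r ∈ Mrels p n) :
    PresentedGroup.mk (Mrels p n) r = 1 :=
  (QuotientGroup.eq_one_iff _).mpr (Subgroup.subset_normalClosure hr)

lemma Ma_eq : Ma p n = PresentedGroup.mk (Mrels p n) (FreeGroup.of 0) := rfl
lemma Mb_eq : Mb p n = PresentedGroup.mk (Mrels p n) (FreeGroup.of 1) := rfl

lemma R1 : Ma p n ^ (p ^ (n - 1)) = 1 := by
  rw [Ma_eq, ← map_pow]
  exact rel_one p n (Set.mem_insert _ _)

lemma R2 : Mb p n ^ p = 1 := by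
  rw [Mb_eq, ← map_pow]
  exact rel_one p n (Set.mem_insert_iff.mpr (Or.inr (Set.mem_insert _ _)))

lemma R3 : (Mb p n)⁻¹ * Ma p n * Mb p n = Ma p n ^ (p ^ (n - 2) + 1) := by
  rw [← mul_inv_eq_one]
  rw [Ma_eq, Mb_eq, ← map_pow, ← map_inv, ← map_inv, ← map_mul, ← map_mul, ← map_mul]
  exact rel_one p n (Set.mem_insert_iff.mpr (Or.inr (Set.mem_insert_iff.mpr
    (Or.inr rfl))))

lemma apow_mod (k : ℕ) : Ma p n ^ k = Ma p n ^ (k % p ^ (n - 1)) := by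
  conv_lhs => rw [← Nat.div_add_mod k (p ^ (n - 1))]
  rw [pow_add, pow_mul, R1, one_pow, one_mul]

lemma apow_congr {j k : ℕ} (h : (j : ZMod (p ^ (n - 1))) = (k : ZMod (p ^ (n - 1)))) :
    Ma p n ^ j = Ma p n ^ k := by
  have hmod : j % p ^ (n - 1) = k % p ^ (n - 1) := (ZMod.natCast_eq_natCast_iff _ _ _).mp h
  rw [apow_mod, hmod, ← apow_mod]

lemma bpow_mod (k : ℕ) : Mb p n ^ k = Mb p n ^ (k % p) := by
  conv_lhs => rw [← Nat.div_add_mod k p]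
  rw [pow_add, pow_mul, R2, one_pow, one_mul]

/-- `a^x` for `x : ZMod (p^(n-1))`. -/
def powZ (x : ZMod (p ^ (n - 1))) : Mgrp p n := Ma p n ^ x.val

/-- `b^y` for `y : ZMod p`. -/
def powB (y : ZMod p) : Mgrp p n := Mb p n ^ y.val

lemma powZ_natCast (k : ℕ) : powZ p n (k : ZMod (p ^ (n - 1))) = Ma p n ^ k := by
  rw [powZ, ZMod.val_natCast, ← apow_mod]

lemma powB_natCast (k : ℕ) : powB p n (k : ZMod p) = Mb p n ^ k := by
  rw [powB, ZMod.val_natCast, ← bpow_mod]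

lemma powZ_add (x w : ZMod (p ^ (n - 1))) :
    powZ p n (x + w) = powZ p n x * powZ p n w := by
  rw [powZ, powZ, powZ, ZMod.val_add, ← apow_mod, pow_add]

lemma powB_add (y z : ZMod p) : powB p n (y + z) = powB p n y * powB p n z := by
  rw [powB, powB, powB, ZMod.val_add, ← bpow_mod, pow_add]

lemma conj_pow' (g a : Mgrp p n) (k : ℕ) : (g⁻¹ * a * g) ^ k = g⁻¹ * a ^ k * g := by
  have h := conj_pow (a := g⁻¹) (b := a) (i := k)
  rwa [inv_inv] at h

lemma L0 (x : ZMod (p ^ (n - 1))) :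
    (Mb p n)⁻¹ * powZ p n x * Mb p n = powZ p n ((1 + mm p n) * x) := by
  rw [powZ, ← conj_pow', R3, ← pow_mul, powZ]
  apply apow_congr
  push_cast [ZMod.natCast_zmod_val, mm]
  ring

lemma L1 (x : ZMod (p ^ (n - 1))) :
    Mb p n * powZ p n x = powZ p n (uu p n * x) * Mb p n := by
  have key : (1 + mm p n) * (uu p n * x) = x := by linear_combination x * uu_mul p n
  have h := L0 p n (uu p n * x)
  rw [key] at h
  rw [← h]
  group

lemma L2 (k : ℕ) (x : ZMod (p ^ (n - 1))) :
    Mb p n ^ k * powZ p n x = powZ p n (uu p n ^ k * x) * Mb p n ^ k := by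
  induction k generalizing x with
  | zero => simp
  | succ k ih =>
    rw [pow_succ, mul_assoc, L1, ← mul_assoc, ih, mul_assoc, ← pow_succ]
    congr 1
    congr 1
    rw [pow_succ]
    ring

end Homs

section Iso

variable (p n : ℕ) [hp : Fact p.Prime] [hn : Fact (3 ≤ n)]

open Mdl

instance : Fact (1 < p) := ⟨hp.out.one_lt⟩
instance : Fact (1 < p ^ (n - 1)) :=
  ⟨Nat.one_lt_pow (by have := hn.out; omega) hp.out.one_lt⟩

lemma uu_neg_one : uu p n ^ ((-1 : ZMod p)).val = 1 + mm p n := by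
  have h1 : uu p n ^ ((-1 : ZMod p) + 1).val
      = uu p n ^ ((-1 : ZMod p)).val * uu p n ^ ((1 : ZMod p)).val := uu_pow_val_add p n _ _
  rw [neg_add_cancel, ZMod.val_zero, ZMod.val_one, pow_zero, pow_one] at h1
  calc uu p n ^ ((-1 : ZMod p)).val
      = uu p n ^ ((-1 : ZMod p)).val * (uu p n * (1 + mm p n)) := by rw [uu_mul, mul_one]
    _ = (uu p n ^ ((-1 : ZMod p)).val * uu p n) * (1 + mm p n) := by rw [mul_assoc]
    _ = 1 + mm p n := by rw [← h1, one_mul]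

lemma A_pow_card : A p n ^ (p ^ (n - 1)) = 1 := by
  rw [A_pow, ZMod.natCast_self]; rfl

lemma B_pow_p : B p n ^ p = 1 := by
  rw [B_pow, ZMod.natCast_self]; rfl

lemma B_inv : (B p n)⁻¹ = ⟨0, -1⟩ := by
  ext
  · simp [B]
  · simp [B]

lemma BAB : (B p n)⁻¹ * A p n * B p n = A p n ^ (p ^ (n - 2) + 1) := by
  rw [A_pow, B_inv]
  ext
  · simp [A, B, uu_neg_one]
    rw [mm]
    push_cast
    ring
  · simp [A, B]

/-- The images of the generators in the model. -/
def f2 : Fin 2 → Mdl p n := ![A p n, B p n]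

@[simp] lemma f2_zero : f2 p n 0 = A p n := rfl
@[simp] lemma f2_one : f2 p n 1 = B p n := rfl

lemma hrels : ∀ r ∈ Mrels p n, FreeGroup.lift (f2 p n) r = 1 := by
  intro r hr
  simp only [Mrels, Set.mem_insert_iff, Set.mem_singleton_iff] at hr
  rcases hr with rfl | rfl | rfl
  · rw [map_pow, FreeGroup.lift_apply_of, f2_zero, A_pow_card]
  · rw [map_pow, FreeGroup.lift_apply_of, f2_one, B_pow_p]
  · rw [map_mul, map_inv, map_mul, map_mul, map_inv, map_pow, FreeGroup.lift_apply_of,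
      FreeGroup.lift_apply_of, f2_zero, f2_one, mul_inv_eq_one, BAB]

/-- The canonical hom from the presented group to the model. -/
def F : Mgrp p n →* Mdl p n := PresentedGroup.toGroup (hrels p n)

@[simp] lemma F_Ma : F p n (Ma p n) = A p n := by
  show F p n (PresentedGroup.of 0) = A p n
  rw [F, PresentedGroup.toGroup.of, f2_zero]

@[simp] lemma F_Mb : F p n (Mb p n) = B p n := by
  show F p n (PresentedGroup.of 1) = B p n
  rw [F, PresentedGroup.toGroup.of, f2_one]

/-- The inverse hom. -/
def Phi : Mdl p n →* Mgrp p n :=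
  MonoidHom.mk' (fun g => powZ p n g.x * powB p n g.y) (by
    intro g h
    show powZ p n (g.x + uu p n ^ g.y.val * h.x) * powB p n (g.y + h.y) = _
    have hswap : powZ p n (uu p n ^ g.y.val * h.x) * powB p n g.y
        = powB p n g.y * powZ p n h.x := by
      rw [powB, L2]
    calc powZ p n (g.x + uu p n ^ g.y.val * h.x) * powB p n (g.y + h.y)
        = powZ p n g.x * (powZ p n (uu p n ^ g.y.val * h.x) * powB p n g.y)
            * powB p n h.y := by
          rw [powZ_add, powB_add]; group
      _ = powZ p n g.x * (powB p n g.y * powZ p n h.x) * powB p n h.y := by rw [hswap]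
      _ = (powZ p n g.x * powB p n g.y) * (powZ p n h.x * powB p n h.y) := by group)

lemma Phi_F (g : Mgrp p n) : Phi p n (F p n g) = g := by
  have key : (Phi p n).comp (F p n) = MonoidHom.id _ := by
    apply PresentedGroup.ext
    intro x
    fin_cases x
    · show Phi p n (F p n (Ma p n)) = Ma p n
      rw [F_Ma]
      show powZ p n (A p n).x * powB p n (A p n).y = Ma p n
      show powZ p n 1 * powB p n 0 = Ma p n
      rw [powZ, powB, ZMod.val_one, ZMod.val_zero, pow_one, pow_zero, mul_one]
    · show Phi p n (F p n (Mb p n)) = Mb p n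
      rw [F_Mb]
      show powZ p n 0 * powB p n 1 = Mb p n
      rw [powZ, powB, ZMod.val_one, ZMod.val_zero, pow_one, pow_zero, one_mul]
  exact DFunLike.congr_fun key g

lemma F_Phi (g : Mdl p n) : F p n (Phi p n g) = g := by
  show F p n (powZ p n g.x * powB p n g.y) = g
  rw [map_mul, powZ, powB, map_pow, map_pow, F_Ma, F_Mb, A_pow, B_pow,
    ZMod.natCast_zmod_val, ZMod.natCast_zmod_val]
  ext
  · simp
  · simp

/-- The isomorphism between the presented group and the model. -/
def eIso : Mgrp p n ≃* Mdl p n :=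
  { toFun := F p n, invFun := Phi p n, left_inv := Phi_F p n, right_inv := F_Phi p n,
    map_mul' := map_mul (F p n) }

end Iso

section Central

variable {p n : ℕ} [hp : Fact p.Prime] [hn : Fact (3 ≤ n)]

open Mdl

/-- The hom whose kernel is the centralizer of `⟨x, y⟩`. -/
def fc (x : ZMod (p ^ (n - 1))) (y : ZMod p) : Mdl p n →* Multiplicative (ZMod p) :=
  MonoidHom.mk' (fun g => Multiplicative.ofAdd (y * cp g.x - cp x * g.y)) (by
    intro g h
    show Multiplicative.ofAdd (y * cp (g.x + uu p n ^ g.y.val * h.x) - cp x * (g.y + h.y)) = _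
    rw [map_add, map_mul, cp_uu_pow, one_mul, ← ofAdd_add]
    congr 1
    ring)

lemma fc_apply (x : ZMod (p ^ (n - 1))) (y : ZMod p) (g : Mdl p n) :
    fc x y g = Multiplicative.ofAdd (y * cp g.x - cp x * g.y) := rfl

lemma comm_iff (x : ZMod (p ^ (n - 1))) (y : ZMod p) (g : Mdl p n) :
    g * (⟨x, y⟩ : Mdl p n) = ⟨x, y⟩ * g ↔ y * cp g.x - cp x * g.y = 0 := by
  constructor
  · intro hcomm
    have hx1 : g.x + uu p n ^ g.y.val * x = x + uu p n ^ y.val * g.x :=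
      congrArg Mdl.x hcomm
    rw [uu_pow, uu_pow] at hx1
    have h2 : mm p n * ((g.y.val : ZMod (p ^ (n - 1))) * x
        - (y.val : ZMod (p ^ (n - 1))) * g.x) = 0 := by linear_combination -hx1
    rw [mm_mul_eq_zero_iff] at h2
    rw [map_sub, map_mul, map_mul, cp_natCast, cp_natCast,
      ZMod.natCast_zmod_val, ZMod.natCast_zmod_val] at h2
    linear_combination -h2
  · intro h0
    have h2 : cp ((g.y.val : ZMod (p ^ (n - 1))) * x
        - (y.val : ZMod (p ^ (n - 1))) * g.x) = 0 := by
      rw [map_sub, map_mul, map_mul, cp_natCast, cp_natCast,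
        ZMod.natCast_zmod_val, ZMod.natCast_zmod_val]
      linear_combination -h0
    have h3 := (mm_mul_eq_zero_iff _).mpr h2
    ext
    · show g.x + uu p n ^ g.y.val * x = x + uu p n ^ y.val * g.x
      rw [uu_pow, uu_pow]
      linear_combination -h3
    · show g.y + y = y + g.y
      ring

lemma centralizer_eq (x : ZMod (p ^ (n - 1))) (y : ZMod p) :
    Subgroup.centralizer {(⟨x, y⟩ : Mdl p n)} = (fc x y).ker := by
  ext g
  rw [Subgroup.mem_centralizer_singleton_iff, MonoidHom.mem_ker, fc_apply, comm_iff]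
  constructor
  · intro h0
    rw [h0]
    rfl
  · intro h0
    have := congrArg Multiplicative.toAdd h0
    simpa using this

lemma fc_surj (x : ZMod (p ^ (n - 1))) (y : ZMod p) (hx : cp x ≠ 0) :
    Function.Surjective (fc (p := p) (n := n) x y) := by
  intro c
  refine ⟨⟨0, -(cp x)⁻¹ * c.toAdd⟩, ?_⟩
  rw [fc_apply]
  show Multiplicative.ofAdd (y * cp (0 : ZMod (p ^ (n - 1))) - cp x * (-(cp x)⁻¹ * c.toAdd)) = c
  rw [map_zero, mul_zero]
  have : (0 : ZMod p) - cp x * (-(cp x)⁻¹ * c.toAdd) = c.toAdd := by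
    field_simp
    ring
  rw [this]
  rfl

lemma fc_ker_index (x : ZMod (p ^ (n - 1))) (y : ZMod p) (hx : cp x ≠ 0) :
    (fc (p := p) (n := n) x y).ker.index = p := by
  rw [Subgroup.index_ker]
  rw [MonoidHom.range_eq_top.mpr (fc_surj x y hx)]
  rw [Subgroup.card_top]
  exact (Nat.card_congr Multiplicative.ofAdd.symm).trans (Nat.card_zmod p)

lemma fc_ker_card (x : ZMod (p ^ (n - 1))) (y : ZMod p) (hx : cp x ≠ 0) :
    Nat.card (fc (p := p) (n := n) x y).ker = p ^ (n - 1) := by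
  have h1 := Subgroup.card_mul_index (fc (p := p) (n := n) x y).ker
  rw [fc_ker_index x y hx, card_mdl] at h1
  have h2 : p ^ n = p ^ (n - 1) * p := by
    rw [← pow_succ]; congr 1; have := hn.out; omega
  rw [h2] at h1
  exact Nat.eq_of_mul_eq_mul_right hp.out.pos h1

lemma zpowers_eq (hodd : Odd p) (x : ZMod (p ^ (n - 1))) (y : ZMod p) (hx : cp x ≠ 0) :
    Subgroup.zpowers (⟨x, y⟩ : Mdl p n) = (fc x y).ker := by
  apply Subgroup.eq_of_le_of_card_ge
  · rw [Subgroup.zpowers_le, MonoidHom.mem_ker, fc_apply]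
    show Multiplicative.ofAdd (y * cp x - cp x * y) = 1
    rw [mul_comm, sub_self]
    rfl
  · rw [fc_ker_card x y hx, Nat.card_zpowers,
      orderOf_unit hodd _ (isUnit_of_cp_ne x hx)]

lemma zpowers_index (hodd : Odd p) (x : ZMod (p ^ (n - 1))) (y : ZMod p) (hx : cp x ≠ 0) :
    (Subgroup.zpowers (⟨x, y⟩ : Mdl p n)).index = p := by
  rw [zpowers_eq hodd x y hx, fc_ker_index x y hx]

lemma mem_closure_of_cp_eq_zero (x : ZMod (p ^ (n - 1))) (y : ZMod p) (hx : cp x = 0) :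
    (⟨x, y⟩ : Mdl p n) ∈ Subgroup.closure {A p n ^ p, B p n} := by
  obtain ⟨t, ht⟩ : p ∣ x.val := by
    rwa [cp_val, ZMod.natCast_eq_zero_iff] at hx
  have hsplit : (⟨x, y⟩ : Mdl p n) = (⟨x, 0⟩ : Mdl p n) * ⟨0, y⟩ := by
    ext
    · simp
    · simp
  have h1 : (⟨x, 0⟩ : Mdl p n) = (A p n ^ p) ^ t := by
    rw [← pow_mul, A_pow]
    ext
    · show x = ((p * t : ℕ) : ZMod (p ^ (n - 1)))
      rw [← ht, ZMod.natCast_zmod_val]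
    · rfl
  have h2 : (⟨0, y⟩ : Mdl p n) = B p n ^ y.val := by
    rw [B_pow, ZMod.natCast_zmod_val]
  rw [hsplit, h1, h2]
  have hA : A p n ^ p ∈ Subgroup.closure {A p n ^ p, B p n} :=
    Subgroup.subset_closure (Set.mem_insert _ _)
  have hB : B p n ∈ Subgroup.closure {A p n ^ p, B p n} :=
    Subgroup.subset_closure (Set.mem_insert_of_mem _ rfl)
  exact mul_mem (pow_mem hA t) (pow_mem hB y.val)

end Central

theorem Mgrp_centralizer_outside (p n : ℕ) (hp : p.Prime) (hodd : Odd p) (hn : 3 ≤ n)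
    (h : Mgrp p n) (hh : h ∉ Subgroup.closure {Ma p n ^ p, Mb p n}) :
    Subgroup.centralizer {h} = Subgroup.zpowers h ∧
      (Subgroup.zpowers h).index = p := by
  haveI : Fact p.Prime := ⟨hp⟩
  haveI : Fact (3 ≤ n) := ⟨hn⟩
  set e := eIso p n with he
  set g : Mdl p n := e h with hgdef
  -- the key restriction on `g`
  have hcp : Mdl.cp g.x ≠ 0 := by
    intro h0
    apply hh
    have hmem : g ∈ Subgroup.closure {Mdl.A p n ^ p, Mdl.B p n} :=
      mem_closure_of_cp_eq_zero g.x g.y h0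
    have hmap : (Subgroup.closure {Ma p n ^ p, Mb p n}).map e.toMonoidHom
        = Subgroup.closure {Mdl.A p n ^ p, Mdl.B p n} := by
      rw [MonoidHom.map_closure]
      congr 1
      rw [Set.image_insert_eq, Set.image_singleton]
      have hA : e.toMonoidHom (Ma p n ^ p) = Mdl.A p n ^ p := by
        rw [map_pow]
        congr 1
        exact F_Ma p n
      have hB : e.toMonoidHom (Mb p n) = Mdl.B p n := F_Mb p n
      rw [hA, hB]
    rw [← hmap] at hmem
    rcases Subgroup.mem_map.mp hmem with ⟨k, hk, hek⟩
    rwa [← e.injective hek]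
  -- transfer the centralizer and zpowers through `e`
  have hc1 : Subgroup.comap e.toMonoidHom (Subgroup.centralizer {g})
      = Subgroup.centralizer {h} := by
    ext k
    rw [Subgroup.mem_comap, Subgroup.mem_centralizer_singleton_iff,
      Subgroup.mem_centralizer_singleton_iff, hgdef]
    show e k * e h = e h * e k ↔ _
    rw [← map_mul, ← map_mul, e.injective.eq_iff]
  have hz1 : Subgroup.comap e.toMonoidHom (Subgroup.zpowers g)
      = Subgroup.zpowers h := by
    ext k
    rw [Subgroup.mem_comap, Subgroup.mem_zpowers_iff, Subgroup.mem_zpowers_iff]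
    constructor
    · rintro ⟨kk, hkk⟩
      refine ⟨kk, e.injective ?_⟩
      rw [map_zpow]
      exact hkk
    · rintro ⟨kk, rfl⟩
      exact ⟨kk, by rw [hgdef, ← map_zpow]; rfl⟩
  have hgeta : (⟨g.x, g.y⟩ : Mdl p n) = g := rfl
  have hcent : Subgroup.centralizer {g} = Subgroup.zpowers g := by
    have h1 := centralizer_eq g.x g.y
    have h2 := zpowers_eq hodd g.x g.y hcp
    rw [hgeta] at h1 h2
    rw [h1, ← h2]
  have hidx : (Subgroup.zpowers g).index = p := by
    have := zpowers_index hodd g.x g.y hcp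
    rwa [hgeta] at this
  constructor
  · rw [← hc1, hcent, hz1]
  · rw [← hz1]
    exact (Subgroup.index_comap_of_surjective _ e.surjective).trans hidx
end

section
/- Let p be an odd prime, n ≥ 3, and M_n(p) as above. If h ∈ ⟨a^p, b⟩ but h ∉ ⟨a^p⟩, then the centralizer of h in M_n(p) is ⟨a^p, b⟩. -/
private lemma Mgrp.rel_eq_one {α : Type*} {rels : Set (FreeGroup α)} {r : FreeGroup α}
    (hr : r ∈ rels) : PresentedGroup.mk rels r = 1 :=
  (QuotientGroup.eq_one_iff r).mpr (Subgroup.subset_normalClosure hr)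

private lemma Mgrp.key_pow (p e : ℕ) :
    ((p : ZMod (p ^ (e + 2))) ^ (e + 1) + 1) ^ p = 1 := by
  set m := p ^ (e + 2) with hm
  set t : ZMod m := (p : ZMod m) ^ (e + 1) with ht
  have hp0 : (p : ZMod m) ^ (e + 2) = 0 := by
    rw [← Nat.cast_pow]; exact ZMod.natCast_self m
  have htp : t * p = 0 := by rw [ht, ← pow_succ]; exact hp0
  have htt : t * t = 0 := by
    rw [ht, ← pow_add]
    have h2 : e + 1 + (e + 1) = e + 2 + e := by omega
    rw [h2, pow_add, hp0, zero_mul]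
  rw [add_pow, Finset.sum_range_succ']
  have hz : ∀ i ∈ Finset.range p,
      t ^ (i + 1) * 1 ^ (p - (i + 1)) * (Nat.choose p (i + 1) : ZMod m) = 0 := by
    intro i _
    cases i with
    | zero => simp [Nat.choose_one_right, htp]
    | succ j =>
        have hj : t ^ (j + 1 + 1) = t * t * t ^ j := by ring
        rw [hj, htt, zero_mul, zero_mul, zero_mul]
  rw [Finset.sum_eq_zero hz, zero_add]
  simp

theorem Mgrp_centralizer_inside (p n : ℕ) (hp : p.Prime) (hodd : Odd p) (hn : 3 ≤ n)
    (h : Mgrp p n) (hmem : h ∈ Subgroup.closure {Ma p n ^ p, Mb p n})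
    (hnot : h ∉ Subgroup.zpowers (Ma p n ^ p)) :
    Subgroup.centralizer {h} = Subgroup.closure {Ma p n ^ p, Mb p n} := by
  haveI : Fact p.Prime := ⟨hp⟩
  obtain ⟨e, rfl⟩ : ∃ e, n = e + 3 := ⟨n - 3, by omega⟩
  have h31 : e + 3 - 1 = e + 2 := by omega
  have h32 : e + 3 - 2 = e + 1 := by omega
  set a : Mgrp p (e + 3) := Ma p (e + 3) with ha
  set b : Mgrp p (e + 3) := Mb p (e + 3) with hb
  set R : ℕ := p ^ (e + 1) + 1 with hR
  set m : ℕ := p ^ (e + 2) with hm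
  have hpe1 : 2 ≤ p ^ (e + 1) := le_trans hp.two_le (Nat.le_self_pow (by omega) p)
  have hmsucc : m = p ^ (e + 1) * p := by rw [hm, pow_succ]
  have hm1 : 1 < m := by
    have h2 := hp.two_le
    have : p ^ (e + 1) * 2 ≤ p ^ (e + 1) * p := Nat.mul_le_mul_left _ h2
    omega
  haveI : NeZero m := ⟨by omega⟩
  haveI : Fact (1 < m) := ⟨hm1⟩
  -- the three relations in Mgrp
  have rel1 : a ^ m = 1 := by
    have h1 := Mgrp.rel_eq_one (rels := Mrels p (e + 3))
      (r := FreeGroup.of 0 ^ p ^ (e + 3 - 1)) (Set.mem_insert _ _)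
    rw [map_pow, h31] at h1
    exact h1
  have rel2 : b ^ p = 1 := by
    have h1 := Mgrp.rel_eq_one (rels := Mrels p (e + 3))
      (r := FreeGroup.of 1 ^ p) (Set.mem_insert_of_mem _ (Set.mem_insert _ _))
    rw [map_pow] at h1
    exact h1
  have rel3 : b⁻¹ * a * b = a ^ R := by
    have h1 := Mgrp.rel_eq_one (rels := Mrels p (e + 3))
      (r := (FreeGroup.of 1)⁻¹ * FreeGroup.of 0 * FreeGroup.of 1 *
        (FreeGroup.of 0 ^ (p ^ (e + 3 - 2) + 1))⁻¹)
      (Set.mem_insert_of_mem _ (Set.mem_insert_of_mem _ rfl))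
    rw [map_mul, map_mul, map_mul, map_inv, map_inv, map_pow, h32] at h1
    exact mul_inv_eq_one.mp h1
  -- b commutes with a^p
  have hab : a * b = b * a ^ R := by
    rw [← rel3]; group
  have comm_ab : Commute (a ^ p) b := by
    have hconj : b⁻¹ * a ^ p * b = a ^ (p * R) := by
      have h2 := map_pow (MulAut.conj b⁻¹) a p
      simp only [MulAut.conj_apply, inv_inv] at h2
      rw [h2, rel3, ← pow_mul, mul_comm R p]
    have hpr : p * R = m + p := by rw [hR, hm]; ring
    rw [hpr, pow_add, rel1, one_mul] at hconj
    have h3 : a ^ p * b = b * (b⁻¹ * a ^ p * b) := by group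
    rw [hconj] at h3
    exact h3
  set K : Subgroup (Mgrp p (e + 3)) := Subgroup.closure {a ^ p, b} with hK
  have hapK : a ^ p ∈ K := Subgroup.subset_closure (Set.mem_insert _ _)
  have hbK : b ∈ K := Subgroup.subset_closure (Set.mem_insert_of_mem _ rfl)
  -- representation of elements of K
  have rep : ∀ g ∈ K, ∃ i j : ℤ, g = (a ^ p) ^ i * b ^ j := by
    intro g hg
    induction hg using Subgroup.closure_induction with
    | mem x hx =>
        rcases hx with rfl | rfl
        · exact ⟨1, 0, by simp⟩
        · exact ⟨0, 1, by simp⟩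
    | one => exact ⟨0, 0, by simp⟩
    | mul x y hx hy ihx ihy =>
        obtain ⟨i, j, rfl⟩ := ihx
        obtain ⟨k, l, rfl⟩ := ihy
        refine ⟨i + k, j + l, ?_⟩
        rw [(comm_ab.symm.zpow_zpow j k).mul_mul_mul_comm, ← zpow_add, ← zpow_add]
    | inv x hx ihx =>
        obtain ⟨i, j, rfl⟩ := ihx
        refine ⟨-i, -j, ?_⟩
        rw [mul_inv_rev, ← zpow_neg, ← zpow_neg]
        exact (comm_ab.zpow_zpow (-i) (-j)).eq.symm
  have Kcomm : ∀ x ∈ K, ∀ y ∈ K, Commute x y := by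
    intro x hx y hy
    obtain ⟨i, j, rfl⟩ := rep x hx
    obtain ⟨k, l, rfl⟩ := rep y hy
    exact (((Commute.refl (a ^ p)).zpow_zpow i k).mul_right
        (comm_ab.zpow_zpow i l)).mul_left
      ((comm_ab.symm.zpow_zpow j k).mul_right ((Commute.refl b).zpow_zpow j l))
  -- conjugation formulas
  have hX : a ^ (p ^ (e + 1)) = (a ^ p) ^ (p ^ e) := by
    rw [← pow_mul]
    congr 1
    rw [pow_succ']
  have c1 : a * b * a⁻¹ = b * a ^ (p ^ (e + 1)) := by
    rw [hab, hR, pow_succ]; group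
  have c2 : a⁻¹ * b * a = b * (a ^ (p ^ (e + 1)))⁻¹ := by
    have h2 : b * a = a * b * (a ^ (p ^ (e + 1)))⁻¹ := by
      rw [hab, hR, pow_succ]; group
    calc a⁻¹ * b * a = a⁻¹ * (b * a) := by group
    _ = a⁻¹ * (a * b * (a ^ (p ^ (e + 1)))⁻¹) := by rw [← h2]
    _ = b * (a ^ (p ^ (e + 1)))⁻¹ := by group
  have conjA : ∀ g ∈ K, a * g * a⁻¹ ∈ K := by
    intro g hg
    induction hg using Subgroup.closure_induction with
    | mem x hx =>
        rcases hx with rfl | rfl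
        · have h2 : a * a ^ p * a⁻¹ = a ^ p := by group
          rw [h2]; exact hapK
        · rw [c1, hX]
          exact K.mul_mem hbK (K.pow_mem hapK _)
    | one => simpa using K.one_mem
    | mul x y hx hy ihx ihy =>
        have h2 : a * (x * y) * a⁻¹ = (a * x * a⁻¹) * (a * y * a⁻¹) := by group
        rw [h2]; exact K.mul_mem ihx ihy
    | inv x hx ihx =>
        have h2 : a * x⁻¹ * a⁻¹ = (a * x * a⁻¹)⁻¹ := by group
        rw [h2]; exact K.inv_mem ihx
  have conjA' : ∀ g ∈ K, a⁻¹ * g * a ∈ K := by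
    intro g hg
    induction hg using Subgroup.closure_induction with
    | mem x hx =>
        rcases hx with rfl | rfl
        · have h2 : a⁻¹ * a ^ p * a = a ^ p := by group
          rw [h2]; exact hapK
        · rw [c2, hX]
          exact K.mul_mem hbK (K.inv_mem (K.pow_mem hapK _))
    | one => simpa using K.one_mem
    | mul x y hx hy ihx ihy =>
        have h2 : a⁻¹ * (x * y) * a = (a⁻¹ * x * a) * (a⁻¹ * y * a) := by group
        rw [h2]; exact K.mul_mem ihx ihy
    | inv x hx ihx =>
        have h2 : a⁻¹ * x⁻¹ * a = (a⁻¹ * x * a)⁻¹ := by group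
        rw [h2]; exact K.inv_mem ihx
  have haN : a ∈ Subgroup.normalizer (K : Set (Mgrp p (e + 3))) := by
    rw [Subgroup.mem_normalizer_iff]
    intro g
    constructor
    · exact fun hg => conjA g hg
    · intro hg
      have h2 := conjA' _ hg
      rwa [show a⁻¹ * (a * g * a⁻¹) * a = g by group] at h2
  have hrange : Set.range (PresentedGroup.of : Fin 2 → Mgrp p (e + 3)) = {a, b} := by
    ext g
    constructor
    · rintro ⟨i, rfl⟩
      fin_cases i
      · exact Set.mem_insert _ _
      · exact Set.mem_insert_of_mem _ rfl
    · rintro (rfl | rfl)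
      exacts [⟨0, rfl⟩, ⟨1, rfl⟩]
  have hgen : Subgroup.closure {a, b} = ⊤ := by
    rw [← hrange]; exact PresentedGroup.closure_range_of _
  haveI Knormal : K.Normal := by
    rw [← Subgroup.normalizer_eq_top_iff, eq_top_iff, ← hgen, Subgroup.closure_le]
    rintro x (rfl | rfl)
    · exact haN
    · exact Subgroup.le_normalizer hbK
  have decomp : ∀ g : Mgrp p (e + 3), ∃ (k : ℤ) (u : Mgrp p (e + 3)), u ∈ K ∧ g = a ^ k * u := by
    intro g
    have hg : g ∈ Subgroup.zpowers a ⊔ K := by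
      have h2 : (⊤ : Subgroup (Mgrp p (e + 3))) ≤ Subgroup.zpowers a ⊔ K := by
        rw [← hgen, Subgroup.closure_le]
        rintro x (rfl | rfl)
        · exact Subgroup.mem_sup_left (Subgroup.mem_zpowers a)
        · exact Subgroup.mem_sup_right hbK
      exact h2 trivial
    have h3 := Subgroup.mul_normal (Subgroup.zpowers a) K
    rw [← SetLike.mem_coe, h3] at hg
    obtain ⟨x, hx, y, hy, rfl⟩ := hg
    obtain ⟨k, rfl⟩ := Subgroup.mem_zpowers_iff.mp hx
    exact ⟨k, y, hy, rfl⟩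
  -- the concrete model
  set A : Equiv.Perm (ZMod m) := Equiv.addLeft (1 : ZMod m) with hA
  have hcop : Nat.Coprime R m := by
    rw [hm]
    apply Nat.Coprime.pow_right
    rw [Nat.coprime_comm, hp.coprime_iff_not_dvd]
    intro hdvd
    have h1 : p ∣ 1 := (Nat.dvd_add_right (dvd_pow_self p (Nat.succ_ne_zero e))).mp hdvd
    exact hp.one_lt.ne' (Nat.dvd_one.mp h1)
  set ru : (ZMod m)ˣ := ZMod.unitOfCoprime R hcop with hru
  have hruval : (ru : ZMod m) = (R : ℕ) := ZMod.coe_unitOfCoprime _ _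
  have hrup : ru ^ p = 1 := by
    ext
    rw [Units.val_pow_eq_pow_val, hruval, Units.val_one, hR]
    push_cast
    exact Mgrp.key_pow p e
  have hRm : R < m := by
    have h7 : p ^ (e + 1) * 2 ≤ m := by rw [hmsucc]; exact Nat.mul_le_mul_left _ hp.two_le
    omega
  have hru1 : ru ≠ 1 := by
    intro heq
    have hv : ((R : ℕ) : ZMod m).val = 1 := by
      rw [← hruval, heq, Units.val_one, ZMod.val_one]
    rw [ZMod.val_natCast_of_lt hRm] at hv
    omega
  have hro : orderOf ru = p := orderOf_eq_prime hrup hru1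
  set su : (ZMod m)ˣ := ru⁻¹ with hsu
  have hsuo : orderOf su = p := by rw [hsu, orderOf_inv, hro]
  set B : Equiv.Perm (ZMod m) := MulAction.toPermHom (ZMod m)ˣ (ZMod m) su with hB
  set F : Fin 2 → Equiv.Perm (ZMod m) := ![A, B] with hF
  have hrels : ∀ r ∈ Mrels p (e + 3), FreeGroup.lift F r = 1 := by
    rintro r (rfl | rfl | rfl)
    · rw [map_pow, FreeGroup.lift_apply_of, h31]
      show A ^ m = 1
      rw [hA, Equiv.nsmul_addLeft, nsmul_eq_mul, mul_one]
      rw [ZMod.natCast_self, Equiv.addLeft_zero]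
    · rw [map_pow, FreeGroup.lift_apply_of]
      show B ^ p = 1
      have h2 : su ^ p = 1 := by rw [hsu, inv_pow, hrup, inv_one]
      rw [hB, ← map_pow, h2, map_one]
    · rw [map_mul, map_mul, map_mul, map_inv, map_inv, map_pow, FreeGroup.lift_apply_of,
        FreeGroup.lift_apply_of, h32]
      show B⁻¹ * A * B * (A ^ (p ^ (e + 1) + 1))⁻¹ = 1
      rw [mul_inv_eq_one]
      ext x
      rw [hB, ← map_inv]
      simp only [Equiv.Perm.mul_apply, MulAction.toPermHom_apply, MulAction.toPerm_apply,
        hA, Equiv.nsmul_addLeft, Equiv.coe_addLeft, nsmul_eq_mul, mul_one]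
      rw [hsu, inv_inv, smul_add, smul_smul, mul_inv_cancel, one_smul]
      rw [Units.smul_def, smul_eq_mul, mul_one, hruval, hR]
  set φ : Mgrp p (e + 3) →* Equiv.Perm (ZMod m) := PresentedGroup.toGroup hrels with hφ
  have hφa : φ a = A := by
    rw [ha, hφ]
    show PresentedGroup.toGroup hrels (PresentedGroup.of 0) = A
    rw [PresentedGroup.toGroup.of]
    simp [hF]
  have hφb : φ b = B := by
    rw [hb, hφ]
    show PresentedGroup.toGroup hrels (PresentedGroup.of 1) = B
    rw [PresentedGroup.toGroup.of]
    simp [hF]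
  -- main argument
  apply le_antisymm
  · intro g hg
    rw [Subgroup.mem_centralizer_singleton_iff] at hg
    obtain ⟨k, u, huK, rfl⟩ := decomp g
    by_cases hpk : (p : ℤ) ∣ k
    · obtain ⟨c, rfl⟩ := hpk
      have h2 : a ^ ((p : ℤ) * c) = (a ^ p) ^ c := by rw [zpow_mul, zpow_natCast]
      rw [h2]
      exact K.mul_mem (Subgroup.zpow_mem K hapK c) huK
    · exfalso
      have hcom : a ^ k * h = h * a ^ k := by
        have h1 : a ^ k * u * h = h * (a ^ k * u) := hg
        have h2 : u * h = h * u := (Kcomm u huK h hmem).eq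
        have h3 : a ^ k * u * h = a ^ k * h * u := by rw [mul_assoc, h2, mul_assoc]
        have h4 : h * (a ^ k * u) = h * a ^ k * u := by rw [mul_assoc]
        rw [h3, h4] at h1
        exact mul_right_cancel h1
      obtain ⟨i, j, rfl⟩ := rep h hmem
      have hφcom := congrArg φ hcom
      simp only [map_mul, map_zpow, map_pow, hφa, hφb] at hφcom
      have hev := DFunLike.congr_fun hφcom (0 : ZMod m)
      rw [hB, ← map_zpow] at hev
      simp only [Equiv.Perm.mul_apply, hA, Equiv.nsmul_addLeft, Equiv.zsmul_addLeft,
        Equiv.coe_addLeft, nsmul_eq_mul, mul_one, zsmul_eq_mul,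
        MulAction.toPermHom_apply, MulAction.toPerm_apply, Units.smul_def, smul_eq_mul,
        add_zero, mul_zero] at hev
      have hkey : ((su ^ j : (ZMod m)ˣ) : ZMod m) * ((k : ℤ) : ZMod m) = ((k : ℤ) : ZMod m) := by
        linear_combination -hev
      have hkcop : IsCoprime (k : ℤ) (m : ℤ) := by
        rw [Int.isCoprime_iff_gcd_eq_one]
        have hnd : ¬ p ∣ k.natAbs := by
          intro hd
          exact hpk (Int.natCast_dvd.mpr hd)
        have hc : Nat.Coprime k.natAbs m := by
          rw [hm]
          exact Nat.Coprime.pow_right _ (Nat.coprime_comm.mp (hp.coprime_iff_not_dvd.mpr hnd))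
        simpa [Int.gcd] using hc
      obtain ⟨x, y, hxy⟩ := hkcop
      have hk1 : (x : ZMod m) * ((k : ℤ) : ZMod m) = 1 := by
        have h5 := congrArg (fun z : ℤ => (z : ZMod m)) hxy
        push_cast at h5
        rwa [show ((m : ℕ) : ZMod m) = 0 from ZMod.natCast_self m, mul_zero, add_zero] at h5
      have hkunit : IsUnit ((k : ℤ) : ZMod m) :=
        IsUnit.of_mul_eq_one _ (by rw [mul_comm]; exact hk1)
      have hsval1 : ((su ^ j : (ZMod m)ˣ) : ZMod m) = 1 := by
        have h6 : ((k : ℤ) : ZMod m) * ((su ^ j : (ZMod m)ˣ) : ZMod m)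
            = ((k : ℤ) : ZMod m) * 1 := by rw [mul_comm, hkey, mul_one]
        exact hkunit.mul_left_cancel h6
      have hsuj : su ^ j = 1 := by
        ext; rw [hsval1, Units.val_one]
      have hpj : (p : ℤ) ∣ j := by
        rw [← hsuo]
        exact orderOf_dvd_iff_zpow_eq_one.mpr hsuj
      obtain ⟨c, rfl⟩ := hpj
      apply hnot
      have hbj : b ^ ((p : ℤ) * c) = 1 := by
        rw [zpow_mul, zpow_natCast, rel2, one_zpow]
      rw [hbj, mul_one]
      exact Subgroup.zpow_mem _ (Subgroup.mem_zpowers _) i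
  · intro x hx
    rw [Subgroup.mem_centralizer_singleton_iff]
    exact (Kcomm x hx h hmem).eq
end
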